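/- arXiv:1108.0169 — 4 statements merged into one kernel-verified Lean document; each statement's English description precedes it below -/
import Mathlib

section
/- Let $(E_i)_{i\in\mathbb{N}}$ and $(F_j)_{j\in\mathbb{N}}$ be sequences of normed spaces, $H$ a topological vector space, and $\beta_{i,j}\colon E_i \times F_j \to H$ continuous bilinear maps for $i,j\in\mathbb{N}$. Then the bilinear map $\beta\colon \bigoplus_{i\in\mathbb{N}}E_i \times \bigoplus_{j\in\mathbb{N}}F_j \to H$ defined by $\beta((x_i)_i, (y_j)_j) = \sum_{(i,j)\in\mathbb{N}^2}\beta_{i,j}(x_i,y_j)$ is continuous. -/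
open Topology Filter Pointwise


lemma exists_sumW {H : Type*} [AddCommGroup H] [TopologicalSpace H] [IsTopologicalAddGroup H]
    {V : Set H} (hV : V ∈ 𝓝 0) :
    ∃ W : ℕ → Set H, (∀ n, W n ∈ 𝓝 0) ∧
      ∀ (s : Finset ℕ) (g : ℕ → H), (∀ n ∈ s, g n ∈ W n) → ∑ n ∈ s, g n ∈ V := by
  have key : ∀ U : {S : Set H // S ∈ 𝓝 (0:H)},
      ∃ U' : {S : Set H // S ∈ 𝓝 (0:H)}, (U' : Set H) + (U' : Set H) ⊆ (U : Set H) := by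
    rintro ⟨U, hU⟩
    obtain ⟨U', hU', h⟩ := exists_nhds_zero_half hU
    refine ⟨⟨U', hU'⟩, ?_⟩
    rintro z ⟨a, ha, b, hb, rfl⟩
    exact h a ha b hb
  choose f hf using key
  let Wc : ℕ → {S : Set H // S ∈ 𝓝 (0:H)} :=
    fun n => Nat.rec (f ⟨V, hV⟩) (fun _ p => f p) n
  set W : ℕ → Set H := fun n => (Wc n).1 with hWdef
  have hWmem : ∀ n, W n ∈ 𝓝 0 := fun n => (Wc n).2
  have hWadd : ∀ n, W (n+1) + W (n+1) ⊆ W n := fun n => hf (Wc n)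
  have hW0 : W 0 + W 0 ⊆ V := hf ⟨V, hV⟩
  have h0 : ∀ n, (0:H) ∈ W n := fun n => mem_of_mem_nhds (hWmem n)
  have hmono : ∀ n, W (n+1) ≤ W n := fun n x hx => by
    have := Set.add_mem_add hx (h0 (n+1))
    rw [add_zero] at this
    exact hWadd n this
  have hanti : Antitone W := antitone_nat_of_succ_le hmono
  have claim : ∀ s : Finset ℕ, ∀ g : ℕ → H, ∀ m, (∀ n ∈ s, m ≤ n) →
      (∀ n ∈ s, g n ∈ W (n+1)) → ∑ n ∈ s, g n ∈ W m := by
    intro s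
    induction s using Finset.induction_on_min with
    | empty => intro g m _ _; simpa using h0 m
    | insert a s ha ih =>
      intro g m hm hg
      have hanotin : a ∉ s := fun h => lt_irrefl a (ha a h)
      rw [Finset.sum_insert hanotin]
      have h1 : g a ∈ W (m+1) :=
        hanti (Nat.succ_le_succ (hm a (Finset.mem_insert_self a s)))
          (hg a (Finset.mem_insert_self a s))
      have h2 : ∑ n ∈ s, g n ∈ W (m+1) := by
        refine hanti (Nat.succ_le_succ (hm a (Finset.mem_insert_self a s)))
          (ih g (a+1) (fun n hn => ha n hn) (fun n hn => hg n (Finset.mem_insert_of_mem hn)))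
      exact hWadd m (Set.add_mem_add h1 h2)
  refine ⟨fun n => W (n+1), fun n => hWmem (n+1), fun s g hg => ?_⟩
  have hs := claim s g 0 (fun n _ => Nat.zero_le n) hg
  have := Set.add_mem_add hs (h0 0)
  rw [add_zero] at this
  exact hW0 this

lemma tendsto_dfinsupp_sum_zero {H : Type*} [AddCommGroup H] [TopologicalSpace H]
    [IsTopologicalAddGroup H]
    {E : ℕ → Type*} [∀ i, AddCommGroup (E i)] [∀ i, TopologicalSpace (E i)]
    [∀ i (x : E i), Decidable (x ≠ 0)]
    [TopologicalSpace (Π₀ i, E i)]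
    (hE : (𝓝 (0 : Π₀ i, E i)).HasBasis
      (fun U : ∀ i, Set (E i) => ∀ i, U i ∈ 𝓝 (0 : E i))
      (fun U => {x : Π₀ i, E i | ∀ i, x i ∈ U i}))
    (f : ∀ i, E i → H) (hf : ∀ i, Tendsto (f i) (𝓝 0) (𝓝 0)) :
    Tendsto (fun x : Π₀ i, E i => x.sum f) (𝓝 0) (𝓝 0) := by
  rw [Filter.tendsto_def]
  intro V hV
  obtain ⟨W, hW, hWsum⟩ := exists_sumW hV
  rw [hE.mem_iff]
  refine ⟨fun i => f i ⁻¹' W i, fun i => hf i (hW i), fun x hx => ?_⟩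
  simp only [Set.mem_preimage]
  unfold DFinsupp.sum
  exact hWsum _ _ (fun n hn => hx n)


lemma exists_sumW_inj {H : Type*} [AddCommGroup H] [TopologicalSpace H] [IsTopologicalAddGroup H]
    {V : Set H} (hV : V ∈ 𝓝 0) :
    ∃ W : ℕ → Set H, (∀ n, W n ∈ 𝓝 0) ∧
      ∀ {ι : Type} (s : Finset ι) (κ : ι → ℕ), Set.InjOn κ s →
        ∀ g : ι → H, (∀ a ∈ s, g a ∈ W (κ a)) → ∑ a ∈ s, g a ∈ V := by
  classical
  obtain ⟨W, hW, hWsum⟩ := exists_sumW hV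
  refine ⟨W, hW, ?_⟩
  intro ι s κ hκ g hg
  classical
  let g' : ℕ → H := fun n => if h : ∃ a ∈ s, κ a = n then g h.choose else 0
  have h1 : ∀ a ∈ s, g' (κ a) = g a := by
    intro a ha
    have hex : ∃ b ∈ s, κ b = κ a := ⟨a, ha, rfl⟩
    have hc := hex.choose_spec
    have : hex.choose = a := hκ hc.1 ha hc.2
    simp only [g', dif_pos hex, this]
  have h2 : ∀ n ∈ s.image κ, g' n ∈ W n := by
    intro n hn
    rw [Finset.mem_image] at hn
    obtain ⟨a, ha, rfl⟩ := hn
    have hex : ∃ b ∈ s, κ b = κ a := ⟨a, ha, rfl⟩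
    have hc := hex.choose_spec
    simp only [g', dif_pos hex]
    have h4 := hg _ hc.1
    rwa [hc.2] at h4
  have h3 := hWsum (s.image κ) g' h2
  rwa [Finset.sum_image (fun a ha b hb h => hκ ha hb h),
    Finset.sum_congr rfl h1] at h3


lemma tendsto_double_sum_zero
    {E F : ℕ → Type*} {H : Type*}
    [∀ i, NormedAddCommGroup (E i)] [∀ i, NormedSpace ℝ (E i)]
    [∀ j, NormedAddCommGroup (F j)] [∀ j, NormedSpace ℝ (F j)]
    [∀ i (x : E i), Decidable (x ≠ 0)] [∀ j (y : F j), Decidable (y ≠ 0)]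
    [AddCommGroup H] [Module ℝ H] [TopologicalSpace H] [IsTopologicalAddGroup H]
    [TopologicalSpace (Π₀ i, E i)] [TopologicalSpace (Π₀ j, F j)]
    (hE : (𝓝 (0 : Π₀ i, E i)).HasBasis
      (fun U : ∀ i, Set (E i) => ∀ i, U i ∈ 𝓝 (0 : E i))
      (fun U => {x : Π₀ i, E i | ∀ i, x i ∈ U i}))
    (hF : (𝓝 (0 : Π₀ j, F j)).HasBasis
      (fun V : ∀ j, Set (F j) => ∀ j, V j ∈ 𝓝 (0 : F j))
      (fun V => {y : Π₀ j, F j | ∀ j, y j ∈ V j}))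
    (β : ∀ i j, E i →ₗ[ℝ] F j →ₗ[ℝ] H)
    (hβ : ∀ i j, Continuous fun p : E i × F j => β i j p.1 p.2) :
    Tendsto (fun p : (Π₀ i, E i) × (Π₀ j, F j) =>
      p.1.sum fun i x => p.2.sum fun j y => β i j x y) (𝓝 0) (𝓝 0) := by
  rw [Filter.tendsto_def]
  intro V hV
  obtain ⟨W, hW, hWsum⟩ := exists_sumW_inj hV
  have hδ : ∀ i j, ∃ δ > (0:ℝ), ∀ (x : E i) (y : F j), ‖x‖ < δ → ‖y‖ < δ →
      β i j x y ∈ W (Nat.pair i j) := by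
    intro i j
    have hc : ContinuousAt (fun p : E i × F j => β i j p.1 p.2) (0,0) := (hβ i j).continuousAt
    have hmem : (fun p : E i × F j => β i j p.1 p.2) ⁻¹' (W (Nat.pair i j))
        ∈ 𝓝 ((0,0) : E i × F j) := hc.preimage_mem_nhds (by simpa using hW (Nat.pair i j))
    rw [Metric.mem_nhds_iff] at hmem
    obtain ⟨δ, δpos, hδ⟩ := hmem
    refine ⟨δ, δpos, fun x y hx hy => ?_⟩
    have hball : ((x, y) : E i × F j) ∈ Metric.ball (0 : E i × F j) δ := by
      rw [Metric.mem_ball, Prod.dist_eq]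
      simpa using max_lt hx hy
    exact hδ hball
  choose δ δpos hδ using hδ
  set η : ℕ → ℝ := fun j =>
    min 1 ((Finset.range (j+1)).inf' Finset.nonempty_range_add_one fun i => δ i j ^ 2) with hηdef
  have ηpos : ∀ j, 0 < η j := fun j =>
    lt_min one_pos ((Finset.lt_inf'_iff _).mpr fun i _ => pow_pos (δpos i j) 2)
  set ε : ℕ → ℝ := fun i =>
    min 1 ((Finset.range (i+1)).inf' Finset.nonempty_range_add_one fun j => δ i j ^ 2 / η j)
      with hεdef
  have εpos : ∀ i, 0 < ε i := fun i =>
    lt_min one_pos ((Finset.lt_inf'_iff _).mpr fun j _ =>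
      div_pos (pow_pos (δpos i j) 2) (ηpos j))
  have hεη : ∀ i j, ε i * η j ≤ δ i j ^ 2 := by
    intro i j
    rcases le_total i j with h | h
    · calc ε i * η j ≤ 1 * (δ i j ^ 2) :=
            mul_le_mul (min_le_left _ _)
              (le_trans (min_le_right _ _)
                (Finset.inf'_le _ (Finset.mem_range.mpr (Nat.lt_succ_of_le h))))
              (ηpos j).le zero_le_one
        _ = δ i j ^ 2 := one_mul _
    · have h1 : ε i ≤ δ i j ^ 2 / η j :=
        le_trans (min_le_right _ _)
          (Finset.inf'_le _ (Finset.mem_range.mpr (Nat.lt_succ_of_le h)))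
      calc ε i * η j ≤ (δ i j ^ 2 / η j) * η j := mul_le_mul_of_nonneg_right h1 (ηpos j).le
        _ = δ i j ^ 2 := div_mul_cancel₀ _ (ηpos j).ne'
  rw [show (𝓝 (0 : (Π₀ i, E i) × (Π₀ j, F j)))
      = 𝓝 (0 : Π₀ i, E i) ×ˢ 𝓝 (0 : Π₀ j, F j) from nhds_prod_eq,
    (hE.prod hF).mem_iff]
  refine ⟨(fun i => Metric.ball 0 (ε i), fun j => Metric.ball 0 (η j)),
    ⟨fun i => Metric.ball_mem_nhds _ (εpos i), fun j => Metric.ball_mem_nhds _ (ηpos j)⟩, ?_⟩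
  rintro ⟨x, y⟩ ⟨hx, hy⟩
  simp only [Set.mem_setOf_eq, mem_ball_zero_iff] at hx hy
  simp only [Set.mem_preimage]
  have hterm : ∀ i ∈ x.support, ∀ j ∈ y.support,
      β i j (x i) (y j) ∈ W (Nat.pair i j) := by
    intro i hi j hj
    have ha : 0 < ‖x i‖ := norm_pos_iff.mpr (DFinsupp.mem_support_iff.mp hi)
    have hb : 0 < ‖y j‖ := norm_pos_iff.mpr (DFinsupp.mem_support_iff.mp hj)
    set t : ℝ := Real.sqrt (‖y j‖ / ‖x i‖) with ht
    have htpos : 0 < t := Real.sqrt_pos.mpr (div_pos hb ha)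
    have hab : ‖x i‖ * ‖y j‖ < δ i j ^ 2 :=
      lt_of_lt_of_le (mul_lt_mul'' (hx i) (hy j) ha.le hb.le) (hεη i j)
    have hs : Real.sqrt (‖x i‖ * ‖y j‖) < δ i j := by
      have h' := Real.sqrt_lt_sqrt (by positivity) hab
      rwa [Real.sqrt_sq (δpos i j).le] at h'
    have hnx : ‖t • x i‖ < δ i j := by
      rw [norm_smul, Real.norm_of_nonneg htpos.le, ht]
      calc Real.sqrt (‖y j‖ / ‖x i‖) * ‖x i‖
          = Real.sqrt (‖y j‖ / ‖x i‖) * Real.sqrt (‖x i‖ ^ 2) := by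
            rw [Real.sqrt_sq ha.le]
        _ = Real.sqrt (‖y j‖ / ‖x i‖ * ‖x i‖ ^ 2) := by
            rw [← Real.sqrt_mul (by positivity) _]
        _ = Real.sqrt (‖x i‖ * ‖y j‖) := by
            congr 1
            field_simp
        _ < δ i j := hs
    have hny : ‖t⁻¹ • y j‖ < δ i j := by
      rw [norm_smul, Real.norm_of_nonneg (inv_nonneg.mpr htpos.le), ht]
      have h2 : (Real.sqrt (‖y j‖ / ‖x i‖))⁻¹ = Real.sqrt (‖x i‖ / ‖y j‖) := by
        rw [← Real.sqrt_inv, inv_div]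
      rw [h2]
      calc Real.sqrt (‖x i‖ / ‖y j‖) * ‖y j‖
          = Real.sqrt (‖x i‖ / ‖y j‖) * Real.sqrt (‖y j‖ ^ 2) := by
            rw [Real.sqrt_sq hb.le]
        _ = Real.sqrt (‖x i‖ / ‖y j‖ * ‖y j‖ ^ 2) := by
            rw [← Real.sqrt_mul (by positivity) _]
        _ = Real.sqrt (‖x i‖ * ‖y j‖) := by
            congr 1
            field_simp
        _ < δ i j := hs
    have hid : β i j (t • x i) (t⁻¹ • y j) = β i j (x i) (y j) := by
      rw [map_smul, map_smul, LinearMap.smul_apply, smul_smul,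
        inv_mul_cancel₀ htpos.ne', one_smul]
    rw [← hid]
    exact hδ i j _ _ hnx hny
  unfold DFinsupp.sum
  rw [← Finset.sum_product']
  refine hWsum (x.support ×ˢ y.support) (fun q => Nat.pair q.1 q.2) ?_ _ ?_
  · intro q _ q' _ h
    have h' := Nat.pair_eq_pair.mp h
    exact Prod.ext h'.1 h'.2
  · intro q hq
    rw [Finset.mem_product] at hq
    exact hterm q.1 hq.1 q.2 hq.2

set_option maxHeartbeats 1000000 in
/-- Corollary: for sequences of *normed* spaces `E i`, `F j` and continuous bilinear
maps `β i j : E i × F j → H`, the bilinear map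
`β ((x_i), (y_j)) = ∑_{i,j} β i j (x_i) (y_j)` on the direct sums (box topology) is
continuous. -/
theorem corollary_normedCase
    {E F : ℕ → Type*} {H : Type*}
    [∀ i, NormedAddCommGroup (E i)] [∀ i, NormedSpace ℝ (E i)]
    [∀ j, NormedAddCommGroup (F j)] [∀ j, NormedSpace ℝ (F j)]
    [∀ i (x : E i), Decidable (x ≠ 0)] [∀ j (y : F j), Decidable (y ≠ 0)]
    [AddCommGroup H] [Module ℝ H] [TopologicalSpace H] [IsTopologicalAddGroup H]
    [TopologicalSpace (Π₀ i, E i)] [IsTopologicalAddGroup (Π₀ i, E i)]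
    [TopologicalSpace (Π₀ j, F j)] [IsTopologicalAddGroup (Π₀ j, F j)]
    (hE : (𝓝 (0 : Π₀ i, E i)).HasBasis
      (fun U : ∀ i, Set (E i) => ∀ i, U i ∈ 𝓝 (0 : E i))
      (fun U => {x : Π₀ i, E i | ∀ i, x i ∈ U i}))
    (hF : (𝓝 (0 : Π₀ j, F j)).HasBasis
      (fun V : ∀ j, Set (F j) => ∀ j, V j ∈ 𝓝 (0 : F j))
      (fun V => {y : Π₀ j, F j | ∀ j, y j ∈ V j}))
    (β : ∀ i j, E i →ₗ[ℝ] F j →ₗ[ℝ] H)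
    (hβ : ∀ i j, Continuous fun p : E i × F j => β i j p.1 p.2) :
    Continuous fun p : (Π₀ i, E i) × (Π₀ j, F j) =>
      p.1.sum fun i x => p.2.sum fun j y => β i j x y := by
  classical
  have hzero2 := tendsto_double_sum_zero hE hF β hβ
  have hB1 : ∀ (x x' : Π₀ i, E i) (y : Π₀ j, F j),
      ((x + x').sum fun i xi => y.sum fun j yj => β i j xi yj)
        = (x.sum fun i xi => y.sum fun j yj => β i j xi yj)
          + (x'.sum fun i xi => y.sum fun j yj => β i j xi yj) := by
    intro x x' y
    refine DFinsupp.sum_add_index (fun i => ?_) (fun i a b => ?_)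
    · simp
    · simp [map_add, LinearMap.add_apply, DFinsupp.sum_add]
  have hB2 : ∀ (x : Π₀ i, E i) (y y' : Π₀ j, F j),
      (x.sum fun i xi => (y + y').sum fun j yj => β i j xi yj)
        = (x.sum fun i xi => y.sum fun j yj => β i j xi yj)
          + (x.sum fun i xi => y'.sum fun j yj => β i j xi yj) := by
    intro x y y'
    have hin : ∀ (i : ℕ) (xi : E i), ((y + y').sum fun j yj => β i j xi yj)
        = (y.sum fun j yj => β i j xi yj) + (y'.sum fun j yj => β i j xi yj) :=
      fun i xi => DFinsupp.sum_add_index (fun j => by simp) (fun j a b => by simp)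
    simp only [hin]
    exact DFinsupp.sum_add
  rw [continuous_iff_continuousAt]
  rintro ⟨x₀, y₀⟩
  have hsw : ∀ (x : Π₀ i, E i) (y : Π₀ j, F j),
      (x.sum fun i xi => y.sum fun j yj => β i j xi yj)
        = (y.sum fun j yj => x.sum fun i xi => β i j xi yj) :=
    fun x y => DFinsupp.sum_comm x y _
  have key : ∀ p : (Π₀ i, E i) × (Π₀ j, F j),
      (p.1.sum fun i xi => p.2.sum fun j yj => β i j xi yj)
        = ((p.1 - x₀).sum fun i xi => (p.2 - y₀).sum fun j yj => β i j xi yj) +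
          (((p.1 - x₀).sum fun i xi => y₀.sum fun j yj => β i j xi yj) +
            (((p.2 - y₀).sum fun j yj => x₀.sum fun i xi => β i j xi yj) +
              (x₀.sum fun i xi => y₀.sum fun j yj => β i j xi yj))) := by
    intro p
    have e1 : (p.1.sum fun i xi => p.2.sum fun j yj => β i j xi yj)
        = ((p.1 - x₀).sum fun i xi => p.2.sum fun j yj => β i j xi yj)
          + (x₀.sum fun i xi => p.2.sum fun j yj => β i j xi yj) := by
      conv_lhs => rw [show p.1 = (p.1 - x₀) + x₀ by abel]
      exact hB1 _ _ _
    have e2 : ((p.1 - x₀).sum fun i xi => p.2.sum fun j yj => β i j xi yj)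
        = ((p.1 - x₀).sum fun i xi => (p.2 - y₀).sum fun j yj => β i j xi yj)
          + ((p.1 - x₀).sum fun i xi => y₀.sum fun j yj => β i j xi yj) := by
      conv_lhs => rw [show p.2 = (p.2 - y₀) + y₀ by abel]
      exact hB2 _ _ _
    have e3 : (x₀.sum fun i xi => p.2.sum fun j yj => β i j xi yj)
        = ((p.2 - y₀).sum fun j yj => x₀.sum fun i xi => β i j xi yj)
          + (x₀.sum fun i xi => y₀.sum fun j yj => β i j xi yj) := by
      conv_lhs => rw [show p.2 = (p.2 - y₀) + y₀ by abel]
      rw [hB2, hsw x₀ (p.2 - y₀)]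
    rw [e1, e2, e3]
    abel
  have tsub1 : Tendsto (fun p : (Π₀ i, E i) × (Π₀ j, F j) => p.1 - x₀)
      (𝓝 (x₀, y₀)) (𝓝 0) :=
    (continuous_fst.sub continuous_const).tendsto' _ _ (by simp)
  have tsub2 : Tendsto (fun p : (Π₀ i, E i) × (Π₀ j, F j) => p.2 - y₀)
      (𝓝 (x₀, y₀)) (𝓝 0) :=
    (continuous_snd.sub continuous_const).tendsto' _ _ (by simp)
  have t0 : Tendsto (fun p : (Π₀ i, E i) × (Π₀ j, F j) => (p.1 - x₀, p.2 - y₀))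
      (𝓝 (x₀, y₀)) (𝓝 (0 : (Π₀ i, E i) × (Π₀ j, F j))) := by
    exact tsub1.prodMk_nhds tsub2
  have T1 : Tendsto (fun p : (Π₀ i, E i) × (Π₀ j, F j) =>
      (p.1 - x₀).sum fun i xi => (p.2 - y₀).sum fun j yj => β i j xi yj)
      (𝓝 (x₀, y₀)) (𝓝 0) := (hzero2.comp t0).congr fun p => rfl
  have hf1 : ∀ i : ℕ,
      Tendsto (fun xi : E i => y₀.sum fun j yj => β i j xi yj) (𝓝 0) (𝓝 0) := by
    intro i
    have hc : Continuous fun xi : E i => y₀.sum fun j yj => β i j xi yj := by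
      unfold DFinsupp.sum
      exact continuous_finset_sum _ fun j _ =>
        (hβ i j).comp (continuous_id.prodMk continuous_const)
    exact hc.tendsto' _ _ (by simp)
  have hf2 : ∀ j : ℕ,
      Tendsto (fun yj : F j => x₀.sum fun i xi => β i j xi yj) (𝓝 0) (𝓝 0) := by
    intro j
    have hc : Continuous fun yj : F j => x₀.sum fun i xi => β i j xi yj := by
      unfold DFinsupp.sum
      exact continuous_finset_sum _ fun i _ =>
        (hβ i j).comp (continuous_const.prodMk continuous_id)
    exact hc.tendsto' _ _ (by simp)
  have T2 : Tendsto (fun p : (Π₀ i, E i) × (Π₀ j, F j) =>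
      (p.1 - x₀).sum fun i xi => y₀.sum fun j yj => β i j xi yj)
      (𝓝 (x₀, y₀)) (𝓝 0) :=
    ((tendsto_dfinsupp_sum_zero hE _ hf1).comp tsub1).congr fun p => rfl
  have T3 : Tendsto (fun p : (Π₀ i, E i) × (Π₀ j, F j) =>
      (p.2 - y₀).sum fun j yj => x₀.sum fun i xi => β i j xi yj)
      (𝓝 (x₀, y₀)) (𝓝 0) :=
    ((tendsto_dfinsupp_sum_zero hF _ hf2).comp tsub2).congr fun p => rfl
  have Tc : Tendsto (fun _ : (Π₀ i, E i) × (Π₀ j, F j) =>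
      x₀.sum fun i xi => y₀.sum fun j yj => β i j xi yj)
      (𝓝 (x₀, y₀)) (𝓝 (x₀.sum fun i xi => y₀.sum fun j yj => β i j xi yj)) :=
    tendsto_const_nhds
  have Tsum : Tendsto (fun p : (Π₀ i, E i) × (Π₀ j, F j) =>
      ((p.1 - x₀).sum fun i xi => (p.2 - y₀).sum fun j yj => β i j xi yj) +
        (((p.1 - x₀).sum fun i xi => y₀.sum fun j yj => β i j xi yj) +
          (((p.2 - y₀).sum fun j yj => x₀.sum fun i xi => β i j xi yj) +
            (x₀.sum fun i xi => y₀.sum fun j yj => β i j xi yj))))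
      (𝓝 (x₀, y₀)) (𝓝 (x₀.sum fun i xi => y₀.sum fun j yj => β i j xi yj)) := by
    have := T1.add (T2.add (T3.add Tc))
    simpa using this
  exact Tsum.congr (fun p => (key p).symm)
end

section
/- Let $H = \mathbb{R}^{\mathbb{N}}$ with the product topology, viewed as an algebra under pointwise multiplication $\diamond$. Then the bilinear map $\beta\colon \bigoplus_{i\in\mathbb{N}}\mathbb{R}^{\mathbb{N}} \times \bigoplus_{j\in\mathbb{N}}\mathbb{R}^{\mathbb{N}} \to \mathbb{R}^{\mathbb{N}}$, $\beta((f_i)_i,(g_j)_j) := \sum_{i,j\in\mathbb{N}} f_i \diamond g_j$, is continuous. -/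
open Topology Filter

/-- The set `{f | ∀ k < n, |f k| < ε}` : a basic neighbourhood of `0` in `ℝ^ℕ`. -/
def boxNbhd (q : ℕ × ℝ) : Set (ℕ → ℝ) := {f | ∀ k < q.1, |f k| < q.2}

lemma boxNbhd_mem_nhds {n : ℕ} {ε : ℝ} (hε : 0 < ε) :
    boxNbhd (n, ε) ∈ 𝓝 (0 : ℕ → ℝ) := by
  rw [nhds_pi]
  refine Filter.mem_pi.2 ⟨Set.Iio n, Set.finite_Iio n, fun _ => Metric.ball 0 ε,
    fun i => Metric.ball_mem_nhds 0 hε, fun f hf k hk => ?_⟩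
  have := hf k hk
  simpa [Real.dist_eq] using this

lemma nhds_zero_hasBasis_boxNbhd :
    (𝓝 (0 : ℕ → ℝ)).HasBasis (fun q : ℕ × ℝ => 0 < q.2) boxNbhd := by
  constructor
  intro s
  constructor
  · intro hs
    rw [nhds_pi] at hs
    obtain ⟨I, hIfin, t, ht, hts⟩ := Filter.mem_pi.1 hs
    have hδ : ∀ i, ∃ δ : ℝ, 0 < δ ∧ (i ∈ I → Metric.ball (0 : ℝ) δ ⊆ t i) := by
      intro i
      by_cases hi : i ∈ I
      · obtain ⟨δ, hδ, hball⟩ := Metric.mem_nhds_iff.1 (ht i)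
        exact ⟨δ, hδ, fun _ => hball⟩
      · exact ⟨1, one_pos, fun h => absurd h hi⟩
    choose δ hδpos hδball using hδ
    classical
    set F : Finset ℕ := hIfin.toFinset with hF
    set F' : Finset ℕ := insert 0 F with hF'
    have hF'ne : F'.Nonempty := ⟨0, Finset.mem_insert_self 0 F⟩
    refine ⟨(F.sup id + 1, F'.inf' hF'ne δ), ?_, ?_⟩
    · simp only
      obtain ⟨i, hi, hival⟩ := Finset.exists_mem_eq_inf' hF'ne δ
      rw [hival]; exact hδpos i
    · intro f hf
      refine hts fun i hi => ?_
      have hiF : i ∈ F := hIfin.mem_toFinset.2 hi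
      have hlt : i < F.sup id + 1 := Nat.lt_succ_of_le (Finset.le_sup (f := id) hiF)
      have h1 : |f i| < F'.inf' hF'ne δ := hf i hlt
      have h2 : F'.inf' hF'ne δ ≤ δ i := Finset.inf'_le δ (Finset.mem_insert_of_mem hiF)
      refine hδball i hi ?_
      simpa [Real.dist_eq] using lt_of_lt_of_le h1 h2
  · rintro ⟨⟨n, ε⟩, hε, hsub⟩
    exact Filter.mem_of_superset (boxNbhd_mem_nhds hε) hsub

/-- Example: the bilinear map
`β ((f_i), (g_j)) = ∑_{i,j} f_i ⋄ g_j` (pointwise products in `ℝ^ℕ` with the product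
topology) on the direct sums `⨁_{i∈ℕ} ℝ^ℕ` (box topology) is continuous. -/
theorem example_pointwiseMul_continuous
    [∀ x : ℕ → ℝ, Decidable (x ≠ 0)]
    [TopologicalSpace (Π₀ _ : ℕ, ℕ → ℝ)] [IsTopologicalAddGroup (Π₀ _ : ℕ, ℕ → ℝ)]
    (hbox : (𝓝 (0 : Π₀ _ : ℕ, ℕ → ℝ)).HasBasis
      (fun U : ℕ → Set (ℕ → ℝ) => ∀ i, U i ∈ 𝓝 (0 : ℕ → ℝ))
      (fun U => {x : Π₀ _ : ℕ, ℕ → ℝ | ∀ i, x i ∈ U i})) :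
    Continuous fun p : (Π₀ _ : ℕ, ℕ → ℝ) × (Π₀ _ : ℕ, ℕ → ℝ) =>
      p.1.sum fun _ f => p.2.sum fun _ g => f * g := by
  classical
  -- the "total sum" additive hom
  set T : (Π₀ _ : ℕ, ℕ → ℝ) →+ (ℕ → ℝ) :=
    DFinsupp.sumAddHom (fun _ : ℕ => AddMonoidHom.id (ℕ → ℝ)) with hT
  have hTapply : ∀ x : Π₀ _ : ℕ, ℕ → ℝ, T x = x.sum fun _ f => f := by
    intro x
    rw [hT, DFinsupp.sumAddHom_apply]
    rfl
  -- continuity of T at 0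
  have hT0 : Tendsto T (𝓝 0) (𝓝 (0 : ℕ → ℝ)) := by
    rw [hbox.tendsto_iff nhds_zero_hasBasis_boxNbhd]
    rintro ⟨n, ε⟩ hε
    refine ⟨fun i => boxNbhd (n, ε / 2 * (1 / 2) ^ i), fun i =>
      boxNbhd_mem_nhds (by positivity), ?_⟩
    intro x hx k hk
    rw [hTapply]
    have hk' : (x.sum fun _ f => f) k = ∑ i ∈ x.support, x i k := by
      rw [DFinsupp.sum, Finset.sum_apply]
    rw [hk']
    rcases Finset.eq_empty_or_nonempty x.support with hS | hS
    · simp [hS, hε]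
    · calc |∑ i ∈ x.support, x i k| ≤ ∑ i ∈ x.support, |x i k| :=
            Finset.abs_sum_le_sum_abs _ _
        _ < ∑ i ∈ x.support, ε / 2 * (1 / 2) ^ i :=
            Finset.sum_lt_sum_of_nonempty hS (fun i _ => hx i k hk)
        _ ≤ ∑ i ∈ Finset.range (x.support.sup id + 1), ε / 2 * (1 / 2) ^ i := by
            refine Finset.sum_le_sum_of_subset_of_nonneg ?_ (fun i _ _ => by positivity)
            intro i hi
            exact Finset.mem_range.2 (Nat.lt_succ_of_le (Finset.le_sup (f := id) hi))
        _ = ε / 2 * ∑ i ∈ Finset.range (x.support.sup id + 1), (1 / 2 : ℝ) ^ i := by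
            rw [Finset.mul_sum]
        _ ≤ ε / 2 * 2 := by
            refine mul_le_mul_of_nonneg_left (sum_geometric_two_le _) (by positivity)
        _ = ε := by ring
  have hTcont : Continuous T := continuous_of_continuousAt_zero T (by
    simpa [ContinuousAt, map_zero] using hT0)
  -- rewrite β as mul ∘ (T × T)
  have hβ : (fun p : (Π₀ _ : ℕ, ℕ → ℝ) × (Π₀ _ : ℕ, ℕ → ℝ) =>
      p.1.sum fun _ f => p.2.sum fun _ g => f * g) = fun p => T p.1 * T p.2 := by
    funext p
    rw [hTapply, hTapply, DFinsupp.sum, DFinsupp.sum, Finset.sum_mul]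
    refine Finset.sum_congr rfl fun i _ => ?_
    simp [DFinsupp.sum, Finset.mul_sum]
  rw [hβ]
  exact (hTcont.comp continuous_fst).mul (hTcont.comp continuous_snd)
end

section
/- The convolution map $f\colon C^\infty_c(\mathbb{R}^n)\times C^\infty_c(\mathbb{R}^n)\to C^\infty_c(\mathbb{R}^n)$, $(\gamma,\eta)\mapsto\gamma*\eta$, is continuous. -/
open Topology Filter Function MeasureTheory

/-- The partial derivative `∂_i f` of `f : ℝⁿ → ℝ`. -/
noncomputable def pderivI (n : ℕ) (i : Fin n) (f : (Fin n → ℝ) → ℝ) :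
    (Fin n → ℝ) → ℝ :=
  fun x => fderiv ℝ f x (Pi.single i 1)

/-- The iterated partial derivative `∂^α f` for a multi-index `α`. -/
noncomputable def pderivMulti (n : ℕ) (α : Fin n → ℕ) (f : (Fin n → ℝ) → ℝ) :
    (Fin n → ℝ) → ℝ :=
  (List.finRange n).foldr (fun i g => (pderivI n i)^[α i] g) f

/-- The norm `‖f‖_k = max_{|α| ≤ k} ‖∂^α f‖_∞` (as a supremum in `ℝ`). -/
noncomputable def crNorm (n k : ℕ) (f : (Fin n → ℝ) → ℝ) : ℝ :=
  sSup {c | ∃ (α : Fin n → ℕ) (x : Fin n → ℝ), (∑ i, α i) ≤ k ∧ c = |pderivMulti n α f x|}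

/-- The space `C^r_K` of `C^r`-functions `ℝⁿ → ℝ` with support contained in `K`. -/
noncomputable def CrK (n : ℕ) (r : ℕ∞) (K : Set (Fin n → ℝ)) :
    Submodule ℝ ((Fin n → ℝ) → ℝ) where
  carrier := {f | ContDiff ℝ r f ∧ tsupport f ⊆ K}
  add_mem' := fun hf hg =>
    ⟨hf.1.add hg.1, (tsupport_add _ _).trans (Set.union_subset hf.2 hg.2)⟩
  zero_mem' := ⟨contDiff_const, by
    have h0 : tsupport (0 : (Fin n → ℝ) → ℝ) = ∅ := tsupport_eq_empty_iff.mpr rfl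
    rw [h0]
    exact Set.empty_subset K⟩
  smul_mem' := fun c f hf =>
    ⟨hf.1.const_smul c, (closure_mono (Function.support_const_smul_subset c f)).trans hf.2⟩

theorem mul_mem_CrK {n : ℕ} {r : ℕ∞} {K : Set (Fin n → ℝ)}
    {f g : (Fin n → ℝ) → ℝ} (hf : f ∈ CrK n r K) (hg : g ∈ CrK n r K) :
    f * g ∈ CrK n r K :=
  ⟨hf.1.mul hg.1, subset_trans (closure_mono (support_mul_subset_left f g)) hf.2⟩

/-- The space `C^r_c(Ω)` of compactly supported `C^r`-functions with support in `Ω`. -/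
noncomputable def Crc (n : ℕ) (r : ℕ∞) (Ω : Set (Fin n → ℝ)) :
    Submodule ℝ ((Fin n → ℝ) → ℝ) where
  carrier := {f | ContDiff ℝ r f ∧ HasCompactSupport f ∧ tsupport f ⊆ Ω}
  add_mem' := fun hf hg =>
    ⟨hf.1.add hg.1, hf.2.1.add hg.2.1,
      (tsupport_add _ _).trans (Set.union_subset hf.2.2 hg.2.2)⟩
  zero_mem' := by
    have h0 : tsupport (0 : (Fin n → ℝ) → ℝ) = ∅ := tsupport_eq_empty_iff.mpr rfl
    refine ⟨contDiff_const, hasCompactSupport_def.mpr ?_, ?_⟩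
    · rw [Function.support_eq_empty_iff.mpr rfl, closure_empty]; exact isCompact_empty
    · rw [h0]; exact Set.empty_subset Ω
  smul_mem' := fun c f hf =>
    ⟨hf.1.const_smul c, hf.2.1.mono (Function.support_const_smul_subset c f),
      (closure_mono (Function.support_const_smul_subset c f)).trans hf.2.2⟩

theorem crK_le_crc {n : ℕ} {r : ℕ∞} {K Ω : Set (Fin n → ℝ)}
    (hK : IsCompact K) (hKΩ : K ⊆ Ω) {f : (Fin n → ℝ) → ℝ}
    (hf : f ∈ CrK n r K) : f ∈ Crc n r Ω :=
  ⟨hf.1, hK.of_isClosed_subset isClosed_closure hf.2, hf.2.trans hKΩ⟩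

theorem conv_mem_Crc {n : ℕ} {γ η : (Fin n → ℝ) → ℝ}
    (hγ : γ ∈ Crc n ⊤ Set.univ) (hη : η ∈ Crc n ⊤ Set.univ) :
    MeasureTheory.convolution γ η (ContinuousLinearMap.mul ℝ ℝ) volume ∈
      Crc n ⊤ Set.univ := by
  refine ⟨?_, ?_, Set.subset_univ _⟩
  · exact hγ.2.1.contDiff_convolution_left _ hγ.1 hη.1.continuous.locallyIntegrable
  · exact hγ.2.1.convolution _ hη.2.1

section Aux
variable {n : ℕ}

theorem contDiff_pderivI {f : (Fin n → ℝ) → ℝ} (hf : ContDiff ℝ (⊤ : ℕ∞) f) (i : Fin n) :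
    ContDiff ℝ (⊤ : ℕ∞) (pderivI n i f) :=
  (hf.fderiv_right (by norm_num)).clm_apply contDiff_const

theorem support_pderivI {f : (Fin n → ℝ) → ℝ} (i : Fin n) :
    Function.support (pderivI n i f) ⊆ tsupport f := by
  intro x hx
  by_contra hxt
  apply hx
  have hev : f =ᶠ[𝓝 x] (fun _ => (0 : ℝ)) := by
    have hmem : (tsupport f)ᶜ ∈ 𝓝 x :=
      (isOpen_compl_iff.mpr (isClosed_tsupport f)).mem_nhds hxt
    filter_upwards [hmem] with y hy
    exact image_eq_zero_of_notMem_tsupport hy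
  have h2 : fderiv ℝ f x = fderiv ℝ (fun _ => (0 : ℝ)) x := hev.fderiv_eq
  simp [pderivI, h2]

theorem tsupport_pderivI {f : (Fin n → ℝ) → ℝ} (i : Fin n) :
    tsupport (pderivI n i f) ⊆ tsupport f :=
  closure_minimal (support_pderivI i) (isClosed_tsupport f)

theorem pderivI_iter_prop (i : Fin n) (m : ℕ) {f : (Fin n → ℝ) → ℝ} (hf : ContDiff ℝ (⊤ : ℕ∞) f) :
    ContDiff ℝ (⊤ : ℕ∞) ((pderivI n i)^[m] f) ∧ tsupport ((pderivI n i)^[m] f) ⊆ tsupport f := by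
  induction m with
  | zero => exact ⟨hf, subset_rfl⟩
  | succ m ih =>
    rw [Function.iterate_succ_apply']
    exact ⟨contDiff_pderivI ih.1 i, (tsupport_pderivI i).trans ih.2⟩

theorem pderiv_foldr_prop (α : Fin n → ℕ) (l : List (Fin n)) {f : (Fin n → ℝ) → ℝ}
    (hf : ContDiff ℝ (⊤ : ℕ∞) f) :
    ContDiff ℝ (⊤ : ℕ∞) (l.foldr (fun i g => (pderivI n i)^[α i] g) f) ∧
      tsupport (l.foldr (fun i g => (pderivI n i)^[α i] g) f) ⊆ tsupport f := by
  induction l with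
  | nil => exact ⟨hf, subset_rfl⟩
  | cons i l ih =>
    rw [List.foldr_cons]
    exact ⟨(pderivI_iter_prop i (α i) ih.1).1,
      (pderivI_iter_prop i (α i) ih.1).2.trans ih.2⟩

theorem pderivMulti_prop (α : Fin n → ℕ) {f : (Fin n → ℝ) → ℝ} (hf : ContDiff ℝ (⊤ : ℕ∞) f) :
    ContDiff ℝ (⊤ : ℕ∞) (pderivMulti n α f) ∧ tsupport (pderivMulti n α f) ⊆ tsupport f :=
  pderiv_foldr_prop α (List.finRange n) hf

theorem pderivI_smul {f : (Fin n → ℝ) → ℝ} (hf : ContDiff ℝ (⊤ : ℕ∞) f) (c : ℝ) (i : Fin n) :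
    pderivI n i (c • f) = c • pderivI n i f := by
  funext x
  have h : fderiv ℝ (fun y => c • f y) x = c • fderiv ℝ f x :=
    fderiv_fun_const_smul (hf.differentiable (by simp)).differentiableAt c
  simp only [pderivI, Pi.smul_apply]
  rw [show (c • f) = (fun y => c • f y) from rfl, h]
  simp

theorem pderivI_iter_smul (i : Fin n) (m : ℕ) {f : (Fin n → ℝ) → ℝ} (hf : ContDiff ℝ (⊤ : ℕ∞) f)
    (c : ℝ) : (pderivI n i)^[m] (c • f) = c • (pderivI n i)^[m] f := by
  induction m with
  | zero => simp
  | succ m ih =>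
    rw [Function.iterate_succ_apply', Function.iterate_succ_apply', ih,
      pderivI_smul (pderivI_iter_prop i m hf).1 c i]

theorem pderivMulti_smul (α : Fin n → ℕ) {f : (Fin n → ℝ) → ℝ} (hf : ContDiff ℝ (⊤ : ℕ∞) f) (c : ℝ) :
    pderivMulti n α (c • f) = c • pderivMulti n α f := by
  unfold pderivMulti
  induction (List.finRange n) with
  | nil => rfl
  | cons i l ih =>
    rw [List.foldr_cons, List.foldr_cons, ih,
      pderivI_iter_smul i (α i) (pderiv_foldr_prop α l hf).1 c]

end Aux
section Aux2
variable {n : ℕ}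

/-- The defining set of `crNorm`. -/
def crNormSet (n k : ℕ) (f : (Fin n → ℝ) → ℝ) : Set ℝ :=
  {c | ∃ (α : Fin n → ℕ) (x : Fin n → ℝ), (∑ i, α i) ≤ k ∧ c = |pderivMulti n α f x|}

theorem crNorm_eq (k : ℕ) (f : (Fin n → ℝ) → ℝ) : crNorm n k f = sSup (crNormSet n k f) := rfl

theorem crNormSet_nonempty (k : ℕ) (f : (Fin n → ℝ) → ℝ) : (crNormSet n k f).Nonempty :=
  ⟨|pderivMulti n (fun _ => 0) f 0|, fun _ => 0, 0, by simp, rfl⟩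

theorem bddAbove_crNormSet {k : ℕ} {f : (Fin n → ℝ) → ℝ} (hf : ContDiff ℝ (⊤ : ℕ∞) f)
    (hsupp : HasCompactSupport f) : BddAbove (crNormSet n k f) := by
  classical
  have hC : ∀ α : Fin n → ℕ, ∃ C, ∀ x, |pderivMulti n α f x| ≤ C := by
    intro α
    have hcont : Continuous (pderivMulti n α f) := (pderivMulti_prop α hf).1.continuous
    have hcs : HasCompactSupport (pderivMulti n α f) :=
      IsCompact.of_isClosed_subset hsupp (isClosed_tsupport _) (pderivMulti_prop α hf).2
    obtain ⟨C, hC⟩ := hcont.bounded_above_of_compact_support hcs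
    exact ⟨C, fun x => by simpa [Real.norm_eq_abs] using hC x⟩
  choose C hC using hC
  set A : Finset (Fin n → ℕ) :=
    Finset.image (fun g : Fin n → Fin (k + 1) => fun i => (g i : ℕ)) Finset.univ with hA
  have hAne : A.Nonempty := ⟨fun i => ((0 : Fin (k + 1)) : ℕ),
    Finset.mem_image.mpr ⟨fun _ => 0, Finset.mem_univ _, rfl⟩⟩
  refine ⟨A.sup' hAne C, ?_⟩
  rintro c ⟨α, x, hk, rfl⟩
  have hα : α ∈ A := by
    refine Finset.mem_image.mpr ⟨fun i => ⟨α i, ?_⟩, Finset.mem_univ _, rfl⟩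
    have h1 : α i ≤ ∑ j, α j := Finset.single_le_sum (fun j _ => Nat.zero_le _) (Finset.mem_univ i)
    omega
  exact le_trans (hC α x) (Finset.le_sup' C hα)

theorem abs_le_crNorm {k : ℕ} {f : (Fin n → ℝ) → ℝ} (hf : ContDiff ℝ (⊤ : ℕ∞) f)
    (hsupp : HasCompactSupport f) {α : Fin n → ℕ} (x : Fin n → ℝ) (h : (∑ i, α i) ≤ k) :
    |pderivMulti n α f x| ≤ crNorm n k f :=
  le_csSup (bddAbove_crNormSet hf hsupp) ⟨α, x, h, rfl⟩

theorem crNorm_nonneg (k : ℕ) (f : (Fin n → ℝ) → ℝ) : 0 ≤ crNorm n k f :=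
  Real.sSup_nonneg (by rintro c ⟨α, x, h, rfl⟩; positivity)

theorem crNorm_le {k : ℕ} {f : (Fin n → ℝ) → ℝ} {B : ℝ} (hB : 0 ≤ B)
    (h : ∀ (α : Fin n → ℕ) (x : Fin n → ℝ), (∑ i, α i) ≤ k → |pderivMulti n α f x| ≤ B) :
    crNorm n k f ≤ B :=
  Real.sSup_le (by rintro c ⟨α, x, hk, rfl⟩; exact h α x hk) hB

theorem crNorm_mono {k k' : ℕ} {f : (Fin n → ℝ) → ℝ} (hf : ContDiff ℝ (⊤ : ℕ∞) f)
    (hsupp : HasCompactSupport f) (hkk' : k ≤ k') : crNorm n k f ≤ crNorm n k' f :=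
  crNorm_le (crNorm_nonneg _ _) fun α x h => abs_le_crNorm hf hsupp x (h.trans hkk')

theorem crNorm_smul_le {k : ℕ} {f : (Fin n → ℝ) → ℝ} (hf : ContDiff ℝ (⊤ : ℕ∞) f)
    (hsupp : HasCompactSupport f) (c : ℝ) : crNorm n k (c • f) ≤ |c| * crNorm n k f := by
  refine crNorm_le (mul_nonneg (abs_nonneg c) (crNorm_nonneg _ _)) fun α x h => ?_
  rw [pderivMulti_smul α hf c]
  simp only [Pi.smul_apply, smul_eq_mul, abs_mul]
  exact mul_le_mul_of_nonneg_left (abs_le_crNorm hf hsupp x h) (abs_nonneg c)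

end Aux2
section Aux3
variable {n : ℕ}

theorem mulCLM_flip : (ContinuousLinearMap.mul ℝ ℝ).flip = ContinuousLinearMap.mul ℝ ℝ := by
  apply ContinuousLinearMap.ext; intro a; apply ContinuousLinearMap.ext; intro b
  simp [mul_comm]

theorem conv_comm (γ η : (Fin n → ℝ) → ℝ) :
    MeasureTheory.convolution γ η (ContinuousLinearMap.mul ℝ ℝ) volume
      = MeasureTheory.convolution η γ (ContinuousLinearMap.mul ℝ ℝ) volume := by
  have h := MeasureTheory.convolution_flip (L := ContinuousLinearMap.mul ℝ ℝ)
    (μ := volume) (f := γ) (g := η)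
  rw [mulCLM_flip] at h
  exact h.symm

theorem pderivI_conv {γ η : (Fin n → ℝ) → ℝ} (hγc : Continuous γ)
    (hη : ContDiff ℝ (⊤ : ℕ∞) η) (hηs : HasCompactSupport η) (i : Fin n) :
    pderivI n i (MeasureTheory.convolution γ η (ContinuousLinearMap.mul ℝ ℝ) volume)
      = MeasureTheory.convolution γ (pderivI n i η) (ContinuousLinearMap.mul ℝ ℝ) volume := by
  funext x
  have hder := hηs.hasFDerivAt_convolution_right (ContinuousLinearMap.mul ℝ ℝ)
    (hγc.locallyIntegrable (μ := volume)) (hη.of_le (by exact_mod_cast le_top)) x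
  show fderiv ℝ _ x (Pi.single i 1) = _
  rw [hder.fderiv]
  rw [MeasureTheory.convolution_precompR_apply (ContinuousLinearMap.mul ℝ ℝ)
    hγc.locallyIntegrable (hηs.fderiv ℝ) (hη.continuous_fderiv (by simp)) x (Pi.single i 1)]
  rfl

theorem pderivI_iter_conv {γ η : (Fin n → ℝ) → ℝ} (hγc : Continuous γ)
    (hη : ContDiff ℝ (⊤ : ℕ∞) η) (hηs : HasCompactSupport η) (i : Fin n) (m : ℕ) :
    (pderivI n i)^[m] (MeasureTheory.convolution γ η (ContinuousLinearMap.mul ℝ ℝ) volume)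
      = MeasureTheory.convolution γ ((pderivI n i)^[m] η)
          (ContinuousLinearMap.mul ℝ ℝ) volume := by
  induction m with
  | zero => rfl
  | succ m ih =>
    rw [Function.iterate_succ_apply', Function.iterate_succ_apply', ih,
      pderivI_conv hγc (pderivI_iter_prop i m hη).1
        (IsCompact.of_isClosed_subset hηs (isClosed_tsupport _) (pderivI_iter_prop i m hη).2) i]

theorem pderiv_foldr_conv {γ η : (Fin n → ℝ) → ℝ} (hγc : Continuous γ)
    (hη : ContDiff ℝ (⊤ : ℕ∞) η) (hηs : HasCompactSupport η) (α : Fin n → ℕ) (l : List (Fin n)) :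
    l.foldr (fun i g => (pderivI n i)^[α i] g)
        (MeasureTheory.convolution γ η (ContinuousLinearMap.mul ℝ ℝ) volume)
      = MeasureTheory.convolution γ (l.foldr (fun i g => (pderivI n i)^[α i] g) η)
          (ContinuousLinearMap.mul ℝ ℝ) volume := by
  induction l with
  | nil => rfl
  | cons i l ih =>
    rw [List.foldr_cons, List.foldr_cons, ih,
      pderivI_iter_conv hγc (pderiv_foldr_prop α l hη).1
        (IsCompact.of_isClosed_subset hηs (isClosed_tsupport _) (pderiv_foldr_prop α l hη).2) i]

theorem pderivMulti_conv_right {γ η : (Fin n → ℝ) → ℝ} (hγc : Continuous γ)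
    (hη : ContDiff ℝ (⊤ : ℕ∞) η) (hηs : HasCompactSupport η) (α : Fin n → ℕ) :
    pderivMulti n α (MeasureTheory.convolution γ η (ContinuousLinearMap.mul ℝ ℝ) volume)
      = MeasureTheory.convolution γ (pderivMulti n α η)
          (ContinuousLinearMap.mul ℝ ℝ) volume :=
  pderiv_foldr_conv hγc hη hηs α (List.finRange n)

theorem pderivMulti_conv_left {γ η : (Fin n → ℝ) → ℝ} (hγ : ContDiff ℝ (⊤ : ℕ∞) γ)
    (hγs : HasCompactSupport γ) (hηc : Continuous η) (α : Fin n → ℕ) :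
    pderivMulti n α (MeasureTheory.convolution γ η (ContinuousLinearMap.mul ℝ ℝ) volume)
      = MeasureTheory.convolution (pderivMulti n α γ) η
          (ContinuousLinearMap.mul ℝ ℝ) volume := by
  rw [conv_comm, pderivMulti_conv_right hηc hγ hγs α, conv_comm]

theorem tsupport_conv_subset {γ η : (Fin n → ℝ) → ℝ} {r s : ℝ} (hr : 0 ≤ r) (hs : 0 ≤ s)
    (hγs : tsupport γ ⊆ Metric.closedBall 0 r) (hηs : tsupport η ⊆ Metric.closedBall 0 s) :
    tsupport (MeasureTheory.convolution γ η (ContinuousLinearMap.mul ℝ ℝ) volume)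
      ⊆ Metric.closedBall 0 (r + s) := by
  refine closure_minimal ?_ Metric.isClosed_closedBall
  intro x hx
  obtain ⟨a, ha, b, hb, rfl⟩ := MeasureTheory.support_convolution_subset
    (ContinuousLinearMap.mul ℝ ℝ) hx
  have ha' : ‖a‖ ≤ r := by
    simpa [mem_closedBall_zero_iff] using hγs (subset_closure ha)
  have hb' : ‖b‖ ≤ s := by
    simpa [mem_closedBall_zero_iff] using hηs (subset_closure hb)
  rw [Metric.mem_closedBall, dist_zero_right]
  exact (norm_add_le a b).trans (add_le_add ha' hb')

theorem abs_conv_le {γ η : (Fin n → ℝ) → ℝ} (hγc : Continuous γ) (hηc : Continuous η)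
    {r a b : ℝ} (hγs : tsupport γ ⊆ Metric.closedBall 0 r)
    (ha : ∀ y, |γ y| ≤ a) (hb : ∀ y, |η y| ≤ b) (x : Fin n → ℝ) :
    |MeasureTheory.convolution γ η (ContinuousLinearMap.mul ℝ ℝ) volume x|
      ≤ a * b * (volume (Metric.closedBall (0 : Fin n → ℝ) r)).toReal := by
  have ha0 : 0 ≤ a := (abs_nonneg _).trans (ha 0)
  have hb0 : 0 ≤ b := (abs_nonneg _).trans (hb 0)
  rw [MeasureTheory.convolution_mul]
  have heq : ∫ t, γ t * η (x - t)
      = ∫ t in Metric.closedBall (0 : Fin n → ℝ) r, γ t * η (x - t) := by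
    refine (MeasureTheory.setIntegral_eq_integral_of_forall_compl_eq_zero fun t ht => ?_).symm
    have : γ t = 0 := by
      by_contra h
      exact ht (hγs (subset_closure (Function.mem_support.mpr h)))
    simp [this]
  rw [heq]
  have := MeasureTheory.norm_setIntegral_le_of_norm_le_const
    (μ := volume) (s := Metric.closedBall (0 : Fin n → ℝ) r)
    (f := fun t => γ t * η (x - t)) (C := a * b)
    (MeasureTheory.measure_closedBall_lt_top)
    (fun t _ => by
      rw [Real.norm_eq_abs, abs_mul]
      exact mul_le_mul (ha t) (hb (x - t)) (abs_nonneg _) ha0)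
  simpa [Real.norm_eq_abs, MeasureTheory.measureReal_def] using this

end Aux3
section Aux4
variable {n : ℕ}

theorem convEx {γ η : (Fin n → ℝ) → ℝ} (hγc : Continuous γ) (hηc : Continuous η)
    (hηs : HasCompactSupport η) :
    MeasureTheory.ConvolutionExists γ η (ContinuousLinearMap.mul ℝ ℝ) volume :=
  hηs.convolutionExists_right (ContinuousLinearMap.mul ℝ ℝ)
    (hγc.locallyIntegrable (μ := volume)) hηc

/-- Convolution as an operation on `C^∞_c`. -/
noncomputable def convCrc (n : ℕ) (γ η : Crc n ⊤ Set.univ) : Crc n ⊤ Set.univ :=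
  ⟨MeasureTheory.convolution γ.1 η.1 (ContinuousLinearMap.mul ℝ ℝ) volume,
    conv_mem_Crc γ.2 η.2⟩

theorem crc_smooth (γ : Crc n ⊤ Set.univ) : ContDiff ℝ (⊤ : ℕ∞) (γ : (Fin n → ℝ) → ℝ) := γ.2.1

theorem crc_cpt (γ : Crc n ⊤ Set.univ) : HasCompactSupport (γ : (Fin n → ℝ) → ℝ) := γ.2.2.1

theorem convCrc_add_right (γ η η' : Crc n ⊤ Set.univ) :
    convCrc n γ (η + η') = convCrc n γ η + convCrc n γ η' := by
  refine Subtype.ext ?_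
  show MeasureTheory.convolution γ.1 (η.1 + η'.1) (ContinuousLinearMap.mul ℝ ℝ) volume = _
  exact (convEx (crc_smooth γ).continuous (crc_smooth η).continuous (crc_cpt η)).distrib_add
    (convEx (crc_smooth γ).continuous (crc_smooth η').continuous (crc_cpt η'))

theorem convCrc_add_left (γ γ' η : Crc n ⊤ Set.univ) :
    convCrc n (γ + γ') η = convCrc n γ η + convCrc n γ' η := by
  refine Subtype.ext ?_
  show MeasureTheory.convolution (γ.1 + γ'.1) η.1 (ContinuousLinearMap.mul ℝ ℝ) volume = _
  exact (convEx (crc_smooth γ).continuous (crc_smooth η).continuous (crc_cpt η)).add_distrib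
    (convEx (crc_smooth γ').continuous (crc_smooth η).continuous (crc_cpt η))

theorem convCrc_smul_left (c : ℝ) (γ η : Crc n ⊤ Set.univ) :
    convCrc n (c • γ) η = c • convCrc n γ η := by
  refine Subtype.ext ?_
  show MeasureTheory.convolution (c • γ.1) η.1 (ContinuousLinearMap.mul ℝ ℝ) volume = _
  exact MeasureTheory.smul_convolution

theorem convCrc_smul_right (c : ℝ) (γ η : Crc n ⊤ Set.univ) :
    convCrc n γ (c • η) = c • convCrc n γ η := by
  refine Subtype.ext ?_
  show MeasureTheory.convolution γ.1 (c • η.1) (ContinuousLinearMap.mul ℝ ℝ) volume = _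
  exact MeasureTheory.convolution_smul

theorem convCrc_comm (γ η : Crc n ⊤ Set.univ) : convCrc n γ η = convCrc n η γ :=
  Subtype.ext (conv_comm _ _)

/-- Convolution as a bi-additive map. -/
noncomputable def convHom (n : ℕ) : Crc n ⊤ Set.univ →+ Crc n ⊤ Set.univ →+ Crc n ⊤ Set.univ :=
  AddMonoidHom.mk' (fun γ => AddMonoidHom.mk' (fun η => convCrc n γ η) (convCrc_add_right γ))
    (fun γ γ' => AddMonoidHom.ext fun η => convCrc_add_left γ γ' η)

@[simp] theorem convHom_apply (γ η : Crc n ⊤ Set.univ) : convHom n γ η = convCrc n γ η := rfl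

end Aux4
section Aux5
variable {n : ℕ}

theorem pderivMulti_zeroIdx (f : (Fin n → ℝ) → ℝ) :
    pderivMulti n (fun _ => 0) f = f := by
  unfold pderivMulti
  induction (List.finRange n) with
  | nil => rfl
  | cons i l ih => rw [List.foldr_cons, ih]; rfl

theorem pderivMulti_zero (α : Fin n → ℕ) :
    pderivMulti n α (0 : (Fin n → ℝ) → ℝ) = 0 := by
  have h := pderivMulti_smul (f := (0 : (Fin n → ℝ) → ℝ)) α contDiff_const (0 : ℝ)
  simpa using h

theorem abs_apply_le_crNorm {f : (Fin n → ℝ) → ℝ} (hf : ContDiff ℝ (⊤ : ℕ∞) f)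
    (hsupp : HasCompactSupport f) (k : ℕ) (x : Fin n → ℝ) : |f x| ≤ crNorm n k f := by
  have h := abs_le_crNorm (k := k) hf hsupp (α := fun _ => 0) x (by simp)
  rwa [pderivMulti_zeroIdx] at h

theorem crNorm_zero_fn (k : ℕ) : crNorm n k (0 : (Fin n → ℝ) → ℝ) = 0 :=
  le_antisymm (crNorm_le le_rfl fun α x _ => by rw [pderivMulti_zero]; simp)
    (crNorm_nonneg _ _)

theorem crK_smooth {K : Set (Fin n → ℝ)} (γ : CrK n ⊤ K) :
    ContDiff ℝ (⊤ : ℕ∞) (γ : (Fin n → ℝ) → ℝ) := γ.2.1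

theorem crK_cpt {K : Set (Fin n → ℝ)} (hK : IsCompact K) (γ : CrK n ⊤ K) :
    HasCompactSupport (γ : (Fin n → ℝ) → ℝ) :=
  IsCompact.of_isClosed_subset hK (isClosed_tsupport _) γ.2.2

/-- auxiliary quantities -/
noncomputable def kappaOf (kε : ℕ → ℕ × ℝ) (i : ℕ) : ℕ :=
  (Finset.range (2 * i + 1)).sup fun m => (kε m).1

noncomputable def volB (n i : ℕ) : ℝ :=
  (volume (Metric.closedBall (0 : Fin n → ℝ) (i : ℝ))).toReal

noncomputable def EminOf (kε : ℕ → ℕ × ℝ) (i : ℕ) : ℝ :=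
  (Finset.Icc i (2 * i)).inf' (Finset.nonempty_Icc.mpr (by omega : i ≤ 2 * i)) fun m => (kε m).2

noncomputable def delOf (n : ℕ) (kε : ℕ → ℕ × ℝ) (i : ℕ) : ℝ :=
  min 1 (EminOf kε i / (2 * (volB n i + 1)))

theorem kappaOf_le (kε : ℕ → ℕ × ℝ) {i m : ℕ} (h : m ≤ 2 * i) : (kε m).1 ≤ kappaOf kε i :=
  Finset.le_sup (f := fun m => (kε m).1) (Finset.mem_range.mpr (by omega))

theorem volB_nonneg (n i : ℕ) : 0 ≤ volB n i := ENNReal.toReal_nonneg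

theorem EminOf_pos {kε : ℕ → ℕ × ℝ} (h : ∀ m, 0 < (kε m).2) (i : ℕ) : 0 < EminOf kε i :=
  Finset.lt_inf'_iff _ |>.mpr fun m _ => h m

theorem EminOf_le (kε : ℕ → ℕ × ℝ) {i j : ℕ} (hji : j ≤ i) :
    EminOf kε i ≤ (kε (i + j)).2 :=
  Finset.inf'_le _ (Finset.mem_Icc.mpr ⟨Nat.le_add_right i j, by omega⟩)

theorem delOf_pos {kε : ℕ → ℕ × ℝ} (h : ∀ m, 0 < (kε m).2) (n i : ℕ) : 0 < delOf n kε i := by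
  have h5 := volB_nonneg n i
  exact lt_min one_pos (div_pos (EminOf_pos h i) (by linarith))

theorem delOf_le_one (n : ℕ) (kε : ℕ → ℕ × ℝ) (i : ℕ) : delOf n kε i ≤ 1 := min_le_left _ _

theorem key_ineq {kε : ℕ → ℕ × ℝ} (h : ∀ m, 0 < (kε m).2) (n : ℕ) {i j : ℕ} (hji : j ≤ i) :
    delOf n kε i * delOf n kε j * volB n i < (kε (i + j)).2 := by
  have h1 := delOf_pos h n i
  have h2 := delOf_pos h n j
  have h3 := delOf_le_one n kε j
  have h5 := volB_nonneg n i
  have h6 := EminOf_pos h i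
  have h7 := EminOf_le kε hji
  have h8 : delOf n kε i * (2 * (volB n i + 1)) ≤ EminOf kε i := by
    rw [← le_div_iff₀ (by linarith)]
    exact min_le_right _ _
  nlinarith [mul_nonneg (mul_nonneg h1.le (sub_nonneg.mpr h3)) h5]

end Aux5
section Aux6
variable {n : ℕ}

theorem incl_cont_aux {K : Set (Fin n → ℝ)} (h1 : IsCompact K)
    [tDK : TopologicalSpace (CrK n ⊤ K)] [tgr : @IsTopologicalAddGroup _ tDK _]
    (hbasis : (𝓝 (0 : CrK n ⊤ K)).HasBasis (fun kε : ℕ × ℝ => 0 < kε.2)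
      (fun kε => {γ : CrK n ⊤ K | crNorm n kε.1 γ < kε.2}))
    [tX : TopologicalSpace (Crc n ⊤ Set.univ)]
    {pf : SeminormFamily ℝ (Crc n ⊤ Set.univ) (Fin 1)} (hWS : WithSeminorms pf)
    (U : Set (Crc n ⊤ Set.univ)) (hgauge : ∀ x, pf 0 x = gauge U x)
    {k : ℕ} {d : ℝ} (hd : 0 < d)
    (hball : ∀ γ : CrK n ⊤ K, crNorm n k γ < d →
      (⟨γ.1, crK_le_crc h1 (Set.subset_univ K) γ.2⟩ : Crc n ⊤ Set.univ) ∈ U) :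
    Continuous fun γ : CrK n ⊤ K =>
      (⟨γ.1, crK_le_crc h1 (Set.subset_univ K) γ.2⟩ : Crc n ⊤ Set.univ) := by
  haveI := hWS.topologicalAddGroup
  let eH : CrK n ⊤ K →+ Crc n ⊤ Set.univ :=
    AddMonoidHom.mk' (fun γ => ⟨γ.1, crK_le_crc h1 (Set.subset_univ K) γ.2⟩)
      (fun a b => Subtype.ext rfl)
  have ht : Filter.Tendsto (fun γ : CrK n ⊤ K =>
      (⟨γ.1, crK_le_crc h1 (Set.subset_univ K) γ.2⟩ : Crc n ⊤ Set.univ))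
      (𝓝 0) (𝓝 0) := by
    rw [hWS.tendsto_nhds]
    intro j ε hε
    have hj : pf j = pf 0 := by rw [Subsingleton.elim j 0]
    have hmin : 0 < min ε 1 := lt_min hε one_pos
    have hc0 : 0 < min ε 1 / 2 := by linarith
    set c := min ε 1 / 2 with hc
    refine hbasis.eventually_iff.mpr ⟨(k, d * c), mul_pos hd hc0, fun γ hγ => ?_⟩
    have hγlt : crNorm n k (γ : (Fin n → ℝ) → ℝ) < d * c := hγ
    -- the rescaled element lies in the ball of radius `d`
    have hsc : crNorm n k ((c⁻¹ • γ : CrK n ⊤ K) : (Fin n → ℝ) → ℝ) < d := by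
      have hley : crNorm n k (c⁻¹ • (γ : (Fin n → ℝ) → ℝ)) ≤ |c⁻¹| * crNorm n k γ :=
        crNorm_smul_le (crK_smooth γ) (crK_cpt h1 γ) c⁻¹
      have habs : |c⁻¹| = c⁻¹ := abs_of_pos (inv_pos.mpr hc0)
      have hlt : |c⁻¹| * crNorm n k (γ : (Fin n → ℝ) → ℝ) < |c⁻¹| * (d * c) :=
        mul_lt_mul_of_pos_left hγlt (by rw [habs]; exact inv_pos.mpr hc0)
      have heq : |c⁻¹| * (d * c) = d := by
        rw [habs]; field_simp
      exact lt_of_le_of_lt hley (by rw [← heq]; exact hlt)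
    have hm := hball _ hsc
    have heγ : (⟨γ.1, crK_le_crc h1 (Set.subset_univ K) γ.2⟩ : Crc n ⊤ Set.univ)
        = c • (⟨(c⁻¹ • γ : CrK n ⊤ K).1,
            crK_le_crc h1 (Set.subset_univ K) (c⁻¹ • γ : CrK n ⊤ K).2⟩ : Crc n ⊤ Set.univ) := by
      refine Subtype.ext ?_
      show (γ : (Fin n → ℝ) → ℝ) = c • (c⁻¹ • (γ : (Fin n → ℝ) → ℝ))
      rw [smul_inv_smul₀ hc0.ne']
    rw [hj, sub_zero, heγ, map_smul_eq_mul]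
    have hle1 : pf 0 (⟨(c⁻¹ • γ : CrK n ⊤ K).1,
        crK_le_crc h1 (Set.subset_univ K) (c⁻¹ • γ : CrK n ⊤ K).2⟩ : Crc n ⊤ Set.univ) ≤ 1 := by
      rw [hgauge]
      exact gauge_le_one_of_mem hm
    have hcc : ‖c‖ = c := Real.norm_of_nonneg hc0.le
    calc ‖c‖ * pf 0 _ ≤ ‖c‖ * 1 := by
          exact mul_le_mul_of_nonneg_left hle1 (norm_nonneg c)
      _ = c := by rw [hcc, mul_one]
      _ < ε := by
          have : min ε 1 ≤ ε := min_le_left _ _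
          linarith
  have h0 : ContinuousAt eH 0 := by
    have h00 : eH 0 = 0 := map_zero eH
    unfold ContinuousAt
    rw [h00]
    exact ht
  exact continuous_of_continuousAt_zero eH h0

end Aux6
section Aux7
variable {n : ℕ}

/-- closed balls exhausting `ℝⁿ`. -/
def KBall (n i : ℕ) : Set (Fin n → ℝ) := Metric.closedBall 0 (i : ℝ)

theorem KBall_eq (n i : ℕ) : KBall n i = Metric.closedBall (0 : Fin n → ℝ) (i : ℝ) := rfl

theorem isCompact_KBall (n i : ℕ) : IsCompact (KBall n i) := isCompact_closedBall _ _

theorem subset_KBall {s : Set (Fin n → ℝ)} (h : IsCompact s) : ∃ i : ℕ, s ⊆ KBall n i := by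
  obtain ⟨r, hr⟩ := h.isBounded.subset_closedBall 0
  exact ⟨⌈r⌉₊, hr.trans (Metric.closedBall_subset_closedBall (Nat.le_ceil r))⟩

set_option maxHeartbeats 2000000 in
theorem main_nbhd (n : ℕ)
    [tK : ∀ K : Set (Fin n → ℝ), TopologicalSpace (CrK n ⊤ K)]
    (htK : ∀ K : Set (Fin n → ℝ), IsCompact K →
      @IsTopologicalAddGroup _ (tK K) _ ∧
      (𝓝 (0 : CrK n ⊤ K)).HasBasis
        (fun kε : ℕ × ℝ => 0 < kε.2)
        (fun kε => {γ : CrK n ⊤ K | crNorm n kε.1 γ < kε.2}))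
    [tc : TopologicalSpace (Crc n ⊤ Set.univ)] [IsTopologicalAddGroup (Crc n ⊤ Set.univ)]
    [ContinuousSMul ℝ (Crc n ⊤ Set.univ)] [LocallyConvexSpace ℝ (Crc n ⊤ Set.univ)]
    (hincl : ∀ (K : Set (Fin n → ℝ)) (h1 : IsCompact K),
      Continuous fun γ : CrK n ⊤ K =>
        (⟨γ.1, crK_le_crc h1 (Set.subset_univ K) γ.2⟩ : Crc n ⊤ Set.univ))
    (hfinest : ∀ t' : TopologicalSpace (Crc n ⊤ Set.univ),
      @IsTopologicalAddGroup _ t' _ → @ContinuousSMul ℝ _ _ _ t' →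
      @LocallyConvexSpace ℝ _ _ _ _ _ t' →
      (∀ (K : Set (Fin n → ℝ)) (h1 : IsCompact K),
        Continuous[tK K, t'] fun γ : CrK n ⊤ K =>
          (⟨γ.1, crK_le_crc h1 (Set.subset_univ K) γ.2⟩ : Crc n ⊤ Set.univ)) →
      tc ≤ t')
    {W : Set (Crc n ⊤ Set.univ)} (hW : W ∈ 𝓝 0) (hWc : Convex ℝ W) :
    ∃ U ∈ 𝓝 (0 : Crc n ⊤ Set.univ), Absorbent ℝ U ∧
      ∀ γ ∈ U, ∀ η ∈ U, convCrc n γ η ∈ W := by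
  classical
  -- extract basis data for each ball
  have h3 : ∀ i : ℕ, ∃ kε : ℕ × ℝ, 0 < kε.2 ∧
      {γ : CrK n ⊤ (KBall n i) | crNorm n kε.1 γ < kε.2} ⊆
        (fun γ : CrK n ⊤ (KBall n i) =>
          (⟨γ.1, crK_le_crc (isCompact_KBall n i) (Set.subset_univ _) γ.2⟩ :
            Crc n ⊤ Set.univ)) ⁻¹' W := by
    intro i
    have hcont := (hincl (KBall n i) (isCompact_KBall n i)).continuousAt (x := 0)
    have h0eq : (0 : Crc n ⊤ Set.univ) = (fun γ : CrK n ⊤ (KBall n i) =>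
        (⟨γ.1, crK_le_crc (isCompact_KBall n i) (Set.subset_univ _) γ.2⟩ :
          Crc n ⊤ Set.univ)) 0 := Subtype.ext rfl
    have hpre := hcont.preimage_mem_nhds (h0eq ▸ hW)
    exact ((htK _ (isCompact_KBall n i)).2.mem_iff).mp hpre
  choose kε hkε1 hkε2 using h3
  have hδpos : ∀ i, 0 < delOf n kε i := delOf_pos hkε1 n
  -- the union of balls and its convex hull
  set S : Set (Crc n ⊤ Set.univ) := ⋃ i : ℕ,
    (fun γ : CrK n ⊤ (KBall n i) =>
      (⟨γ.1, crK_le_crc (isCompact_KBall n i) (Set.subset_univ _) γ.2⟩ : Crc n ⊤ Set.univ)) ''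
      {γ : CrK n ⊤ (KBall n i) | crNorm n (kappaOf kε i) γ < delOf n kε i} with hS
  set U : Set (Crc n ⊤ Set.univ) := convexHull ℝ S with hUdef
  have hmemU : ∀ (i : ℕ) (γ : CrK n ⊤ (KBall n i)),
      crNorm n (kappaOf kε i) (γ : (Fin n → ℝ) → ℝ) < delOf n kε i →
      (⟨γ.1, crK_le_crc (isCompact_KBall n i) (Set.subset_univ _) γ.2⟩ :
        Crc n ⊤ Set.univ) ∈ U := by
    intro i γ hγ
    exact subset_convexHull _ _ (Set.mem_iUnion.mpr ⟨i, Set.mem_image_of_mem _ hγ⟩)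
  -- 0 ∈ U
  have h0U : (0 : Crc n ⊤ Set.univ) ∈ U := by
    have h1 := hmemU 0 0 (by
      rw [show ((0 : CrK n ⊤ (KBall n 0)) : (Fin n → ℝ) → ℝ) = 0 from rfl, crNorm_zero_fn]
      exact hδpos 0)
    rwa [show (⟨(0 : CrK n ⊤ (KBall n 0)).1,
        crK_le_crc (isCompact_KBall n 0) (Set.subset_univ _) (0 : CrK n ⊤ (KBall n 0)).2⟩ :
        Crc n ⊤ Set.univ) = 0 from Subtype.ext rfl] at h1
  -- convex, balanced, absorbent
  have hconvU : Convex ℝ U := convex_convexHull ℝ S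
  have hbalS : Balanced ℝ S := by
    intro a ha x hx
    obtain ⟨y, hy, rfl⟩ := Set.mem_smul_set.mp hx
    obtain ⟨i, hy2⟩ := Set.mem_iUnion.mp hy
    obtain ⟨γ, hγ, rfl⟩ := hy2
    refine Set.mem_iUnion.mpr ⟨i, ⟨a • γ, ?_, Subtype.ext rfl⟩⟩
    show crNorm n (kappaOf kε i) ((a • γ : CrK n ⊤ (KBall n i)) : (Fin n → ℝ) → ℝ)
      < delOf n kε i
    have hrw : ((a • γ : CrK n ⊤ (KBall n i)) : (Fin n → ℝ) → ℝ)
        = a • (γ : (Fin n → ℝ) → ℝ) := rfl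
    rw [hrw]
    have h1 : crNorm n (kappaOf kε i) (a • (γ : (Fin n → ℝ) → ℝ))
        ≤ |a| * crNorm n (kappaOf kε i) γ :=
      crNorm_smul_le (crK_smooth γ) (crK_cpt (isCompact_KBall n i) γ) a
    have h2 : |a| * crNorm n (kappaOf kε i) (γ : (Fin n → ℝ) → ℝ)
        ≤ crNorm n (kappaOf kε i) (γ : (Fin n → ℝ) → ℝ) := by
      have := crNorm_nonneg (n := n) (kappaOf kε i) (γ : (Fin n → ℝ) → ℝ)
      have ha' : |a| ≤ 1 := by rwa [Real.norm_eq_abs] at ha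
      nlinarith
    exact lt_of_le_of_lt (h1.trans h2) hγ
  have hbalU : Balanced ℝ U := hbalS.convexHull
  have habsU : Absorbent ℝ U := by
    intro φ
    obtain ⟨i, hi⟩ := subset_KBall (φ.2.2.1 : HasCompactSupport (φ : (Fin n → ℝ) → ℝ))
    have hφK : (φ : (Fin n → ℝ) → ℝ) ∈ CrK n ⊤ (KBall n i) := ⟨φ.2.1, hi⟩
    have hM0 : 0 ≤ crNorm n (kappaOf kε i) (φ : (Fin n → ℝ) → ℝ) := crNorm_nonneg _ _
    refine Absorbs.of_norm ⟨(crNorm n (kappaOf kε i) (φ : (Fin n → ℝ) → ℝ) / delOf n kε i) + 1,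
      fun c hc => ?_⟩
    have hc0 : (0:ℝ) < crNorm n (kappaOf kε i) (φ : (Fin n → ℝ) → ℝ) / delOf n kε i + 1 := by
      have := div_nonneg hM0 (hδpos i).le
      linarith
    have hcpos : 0 < ‖c‖ := lt_of_lt_of_le hc0 hc
    have hcne : c ≠ 0 := by simpa using hcpos.ne'
    refine Set.singleton_subset_iff.mpr ?_
    rw [Set.mem_smul_set_iff_inv_smul_mem₀ hcne]
    have hmem : (c⁻¹ • (φ : (Fin n → ℝ) → ℝ)) ∈ CrK n ⊤ (KBall n i) :=
      Submodule.smul_mem _ _ hφK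
    have key : crNorm n (kappaOf kε i) (c⁻¹ • (φ : (Fin n → ℝ) → ℝ)) < delOf n kε i := by
      have h1 : crNorm n (kappaOf kε i) (c⁻¹ • (φ : (Fin n → ℝ) → ℝ))
          ≤ |c⁻¹| * crNorm n (kappaOf kε i) (φ : (Fin n → ℝ) → ℝ) :=
        crNorm_smul_le φ.2.1 φ.2.2.1 c⁻¹
      have hca : |c| = ‖c‖ := (Real.norm_eq_abs c).symm
      have h3 : crNorm n (kappaOf kε i) (φ : (Fin n → ℝ) → ℝ) / delOf n kε i < |c| := by
        rw [hca]
        exact lt_of_lt_of_le (lt_add_one _) hc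
    -- M / δ < |c|  →  |c⁻¹| M < δ
      have h4 : crNorm n (kappaOf kε i) (φ : (Fin n → ℝ) → ℝ) < |c| * delOf n kε i := by
        rw [div_lt_iff₀ (hδpos i)] at h3
        linarith
      have h5 : |c⁻¹| * crNorm n (kappaOf kε i) (φ : (Fin n → ℝ) → ℝ) < delOf n kε i := by
        rw [abs_inv]
        rw [inv_mul_lt_iff₀ (by rwa [hca] : (0:ℝ) < |c|)]
        linarith
      exact lt_of_le_of_lt h1 h5
    have h6 := hmemU i ⟨c⁻¹ • (φ : (Fin n → ℝ) → ℝ), hmem⟩ key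
    rwa [show (⟨(⟨c⁻¹ • (φ : (Fin n → ℝ) → ℝ), hmem⟩ : CrK n ⊤ (KBall n i)).1,
        crK_le_crc (isCompact_KBall n i) (Set.subset_univ _)
          (⟨c⁻¹ • (φ : (Fin n → ℝ) → ℝ), hmem⟩ : CrK n ⊤ (KBall n i)).2⟩ :
        Crc n ⊤ Set.univ) = c⁻¹ • φ from Subtype.ext rfl] at h6
  -- trace of U on every compact K
  have hUK : ∀ (K : Set (Fin n → ℝ)) (h1 : IsCompact K), ∃ (k : ℕ) (d : ℝ), 0 < d ∧
      ∀ γ : CrK n ⊤ K, crNorm n k γ < d →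
        (⟨γ.1, crK_le_crc h1 (Set.subset_univ K) γ.2⟩ : Crc n ⊤ Set.univ) ∈ U := by
    intro K h1
    obtain ⟨i, hi⟩ := subset_KBall h1
    refine ⟨kappaOf kε i, delOf n kε i, hδpos i, fun γ hγ => ?_⟩
    have hmem : (γ : (Fin n → ℝ) → ℝ) ∈ CrK n ⊤ (KBall n i) := ⟨γ.2.1, γ.2.2.trans hi⟩
    have h6 := hmemU i ⟨γ.1, hmem⟩ hγ
    rwa [show (⟨(⟨γ.1, hmem⟩ : CrK n ⊤ (KBall n i)).1,
        crK_le_crc (isCompact_KBall n i) (Set.subset_univ _)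
          (⟨γ.1, hmem⟩ : CrK n ⊤ (KBall n i)).2⟩ : Crc n ⊤ Set.univ)
        = (⟨γ.1, crK_le_crc h1 (Set.subset_univ K) γ.2⟩ : Crc n ⊤ Set.univ)
      from Subtype.ext rfl] at h6
  -- U is a neighborhood of zero for tc
  have hUnhds : U ∈ 𝓝 (0 : Crc n ⊤ Set.univ) := by
    set pf : SeminormFamily ℝ (Crc n ⊤ Set.univ) (Fin 1) :=
      (fun _ => gaugeSeminorm hbalU hconvU habsU) with hpf
    set T' : TopologicalSpace (Crc n ⊤ Set.univ) := pf.moduleFilterBasis.topology with hT'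
    have hWS : @WithSeminorms ℝ (Crc n ⊤ Set.univ) (Fin 1) _ _ _ pf T' := ⟨rfl⟩
    have tgrp' : @IsTopologicalAddGroup _ T' _ := hWS.topologicalAddGroup
    have smul' : @ContinuousSMul ℝ _ _ _ T' := hWS.continuousSMul
    have lcs' : @LocallyConvexSpace ℝ _ _ _ _ _ T' := hWS.toLocallyConvexSpace
    have hcont : ∀ (K : Set (Fin n → ℝ)) (h1 : IsCompact K),
        Continuous[tK K, T'] fun γ : CrK n ⊤ K =>
          (⟨γ.1, crK_le_crc h1 (Set.subset_univ K) γ.2⟩ : Crc n ⊤ Set.univ) := by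
      intro K h1
      haveI := (htK K h1).1
      obtain ⟨k, d, hd, hball⟩ := hUK K h1
      exact incl_cont_aux h1 (htK K h1).2 (tX := T') hWS U (fun x => rfl) hd hball
    have hle : tc ≤ T' := hfinest T' tgrp' smul' lcs' hcont
    have hU' : U ∈ @nhds _ T' 0 := by
      refine (hWS.mem_nhds_iff 0 U).mpr ⟨{0}, 1, one_pos, ?_⟩
      intro x hx
      rw [Finset.sup_singleton] at hx
      have hpx : gauge U x < 1 := (Seminorm.mem_ball_zero _).mp hx
      exact gauge_lt_one_subset_self hconvU h0U habsU hpx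
    exact Filter.le_def.mp (nhds_mono hle) U hU'
  refine ⟨U, hUnhds, habsU, ?_⟩
  -- the core estimate on pieces
  have hcore : ∀ i j : ℕ, j ≤ i →
      ∀ (γ : CrK n ⊤ (KBall n i)) (η : CrK n ⊤ (KBall n j)),
        crNorm n (kappaOf kε i) (γ : (Fin n → ℝ) → ℝ) < delOf n kε i →
        crNorm n (kappaOf kε j) (η : (Fin n → ℝ) → ℝ) < delOf n kε j →
        convCrc n ⟨γ.1, crK_le_crc (isCompact_KBall n i) (Set.subset_univ _) γ.2⟩
          ⟨η.1, crK_le_crc (isCompact_KBall n j) (Set.subset_univ _) η.2⟩ ∈ W := by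
    intro i j hji γ η hγ hη
    have hγs := crK_smooth γ
    have hγc := crK_cpt (isCompact_KBall n i) γ
    have hηs := crK_smooth η
    have hηc := crK_cpt (isCompact_KBall n j) η
    have hCc := conv_mem_Crc (crK_le_crc (isCompact_KBall n i) (Set.subset_univ _) γ.2)
      (crK_le_crc (isCompact_KBall n j) (Set.subset_univ _) η.2)
    have hts : tsupport (MeasureTheory.convolution (γ : (Fin n → ℝ) → ℝ) η
        (ContinuousLinearMap.mul ℝ ℝ) volume) ⊆ KBall n (i + j) := by
      have h := tsupport_conv_subset (n := n) (r := (i : ℝ)) (s := (j : ℝ))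
        (by positivity) (by positivity) γ.2.2 η.2.2
      have hcast : ((i + j : ℕ) : ℝ) = (i : ℝ) + (j : ℝ) := by push_cast; ring
      show tsupport _ ⊆ Metric.closedBall 0 ((i + j : ℕ) : ℝ)
      rw [hcast]
      exact h
    have hmemK : (MeasureTheory.convolution (γ : (Fin n → ℝ) → ℝ) η
        (ContinuousLinearMap.mul ℝ ℝ) volume) ∈ CrK n ⊤ (KBall n (i + j)) := ⟨hCc.1, hts⟩
    have ha0 : 0 ≤ crNorm n (kappaOf kε i) (γ : (Fin n → ℝ) → ℝ) := crNorm_nonneg _ _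
    have hb0 : 0 ≤ crNorm n (kappaOf kε j) (η : (Fin n → ℝ) → ℝ) := crNorm_nonneg _ _
    have hbound : crNorm n (kε (i + j)).1 (MeasureTheory.convolution (γ : (Fin n → ℝ) → ℝ) η
        (ContinuousLinearMap.mul ℝ ℝ) volume) < (kε (i + j)).2 := by
      have hle : crNorm n (kε (i + j)).1 (MeasureTheory.convolution (γ : (Fin n → ℝ) → ℝ) η
          (ContinuousLinearMap.mul ℝ ℝ) volume)
          ≤ crNorm n (kappaOf kε i) (γ : (Fin n → ℝ) → ℝ)
            * crNorm n (kappaOf kε j) (η : (Fin n → ℝ) → ℝ) * volB n i := by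
        refine crNorm_le (mul_nonneg (mul_nonneg ha0 hb0) (volB_nonneg n i)) fun α x hα => ?_
        rw [pderivMulti_conv_left hγs hγc hηs.continuous α]
        exact abs_conv_le ((pderivMulti_prop α hγs).1.continuous) hηs.continuous
          ((pderivMulti_prop α hγs).2.trans γ.2.2)
          (fun y => abs_le_crNorm hγs hγc y (le_trans hα (kappaOf_le kε (by omega))))
          (fun y => abs_apply_le_crNorm hηs hηc _ y) x
      have hlt : crNorm n (kappaOf kε i) (γ : (Fin n → ℝ) → ℝ)
          * crNorm n (kappaOf kε j) (η : (Fin n → ℝ) → ℝ) * volB n i < (kε (i + j)).2 := by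
        have hkey := key_ineq hkε1 n hji
        have hstep : crNorm n (kappaOf kε i) (γ : (Fin n → ℝ) → ℝ)
            * crNorm n (kappaOf kε j) (η : (Fin n → ℝ) → ℝ) * volB n i
            ≤ delOf n kε i * delOf n kε j * volB n i := by
          apply mul_le_mul_of_nonneg_right _ (volB_nonneg n i)
          exact mul_le_mul hγ.le hη.le hb0 (hδpos i).le
        linarith
      exact lt_of_le_of_lt hle hlt
    have h7 := hkε2 (i + j) (show (⟨_, hmemK⟩ : CrK n ⊤ (KBall n (i + j)))
      ∈ {γ : CrK n ⊤ (KBall n (i + j)) | crNorm n (kε (i + j)).1 γ < (kε (i + j)).2}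
      from hbound)
    exact h7
  -- pieces to union
  have hSW : ∀ γ ∈ S, ∀ η ∈ S, convCrc n γ η ∈ W := by
    intro γ hγ η hη
    obtain ⟨i, hmi⟩ := Set.mem_iUnion.mp hγ
    obtain ⟨γ', hγ'm, rfl⟩ := hmi
    obtain ⟨j, hmj⟩ := Set.mem_iUnion.mp hη
    obtain ⟨η', hη'm, rfl⟩ := hmj
    rcases le_total j i with h | h
    · exact hcore i j h γ' η' hγ'm hη'm
    · rw [convCrc_comm]
      exact hcore j i h η' γ' hη'm hγ'm
  -- extend to the convex hull
  have step1 : ∀ γ₀ ∈ S, ∀ η₀ ∈ U, convCrc n γ₀ η₀ ∈ W := by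
    intro γ₀ hγ₀ η₀ hη₀
    have hTc : Convex ℝ {η' : Crc n ⊤ Set.univ | convCrc n γ₀ η' ∈ W} := by
      intro x hx y hy a b ha hb hab
      have heq : convCrc n γ₀ (a • x + b • y)
          = a • convCrc n γ₀ x + b • convCrc n γ₀ y := by
        rw [convCrc_add_right, convCrc_smul_right, convCrc_smul_right]
      show convCrc n γ₀ (a • x + b • y) ∈ W
      rw [heq]
      exact hWc hx hy ha hb hab
    exact convexHull_min (fun η' hη' => hSW γ₀ hγ₀ η' hη') hTc hη₀
  intro γ hγ η hη
  have hTc : Convex ℝ {γ' : Crc n ⊤ Set.univ | convCrc n γ' η ∈ W} := by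
    intro x hx y hy a b ha hb hab
    have heq : convCrc n (a • x + b • y) η
        = a • convCrc n x η + b • convCrc n y η := by
      rw [convCrc_add_left, convCrc_smul_left, convCrc_smul_left]
    show convCrc n (a • x + b • y) η ∈ W
    rw [heq]
    exact hWc hx hy ha hb hab
  exact convexHull_min (fun γ' hγ' => step1 γ' hγ' η hη) hTc hγ

end Aux7
open Pointwise in
/-- Corollary (Hirai et al.): the convolution map
`C^∞_c(ℝⁿ) × C^∞_c(ℝⁿ) → C^∞_c(ℝⁿ)`, `(γ, η) ↦ γ ∗ η`, is continuous, where
`C^∞_c(ℝⁿ)` carries the locally convex direct limit topology of the subspaces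
`C^∞_K(ℝⁿ)` over compact sets `K`. -/
theorem convolution_testFunctions_continuous
    (n : ℕ)
    -- topologies on the spaces `C^∞_K(ℝⁿ)`, defined by the norms `‖·‖_k`:
    [tK : ∀ K : Set (Fin n → ℝ), TopologicalSpace (CrK n ⊤ K)]
    (htK : ∀ K : Set (Fin n → ℝ), IsCompact K →
      @IsTopologicalAddGroup _ (tK K) _ ∧
      (𝓝 (0 : CrK n ⊤ K)).HasBasis
        (fun kε : ℕ × ℝ => 0 < kε.2)
        (fun kε => {γ : CrK n ⊤ K | crNorm n kε.1 γ < kε.2}))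
    -- `C^∞_c(ℝⁿ)` carries the locally convex direct limit topology:
    [tc : TopologicalSpace (Crc n ⊤ Set.univ)] [IsTopologicalAddGroup (Crc n ⊤ Set.univ)]
    [ContinuousSMul ℝ (Crc n ⊤ Set.univ)] [LocallyConvexSpace ℝ (Crc n ⊤ Set.univ)]
    (hincl : ∀ (K : Set (Fin n → ℝ)) (h1 : IsCompact K),
      Continuous fun γ : CrK n ⊤ K =>
        (⟨γ.1, crK_le_crc h1 (Set.subset_univ K) γ.2⟩ : Crc n ⊤ Set.univ))
    (hfinest : ∀ t' : TopologicalSpace (Crc n ⊤ Set.univ),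
      @IsTopologicalAddGroup _ t' _ → @ContinuousSMul ℝ _ _ _ t' →
      @LocallyConvexSpace ℝ _ _ _ _ _ t' →
      (∀ (K : Set (Fin n → ℝ)) (h1 : IsCompact K),
        Continuous[tK K, t'] fun γ : CrK n ⊤ K =>
          (⟨γ.1, crK_le_crc h1 (Set.subset_univ K) γ.2⟩ : Crc n ⊤ Set.univ)) →
      tc ≤ t') :
    Continuous fun p : Crc n ⊤ Set.univ × Crc n ⊤ Set.univ =>
      (⟨MeasureTheory.convolution p.1 p.2 (ContinuousLinearMap.mul ℝ ℝ) volume,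
        conv_mem_Crc p.1.2 p.2.2⟩ : Crc n ⊤ Set.univ) := by
  classical
  have key : ∀ W ∈ 𝓝 (0 : Crc n ⊤ Set.univ), ∃ U ∈ 𝓝 (0 : Crc n ⊤ Set.univ),
      Absorbent ℝ U ∧ ∀ γ ∈ U, ∀ η ∈ U, convCrc n γ η ∈ W := by
    intro W hWmem
    obtain ⟨S, ⟨hS1, hS2⟩, hSW⟩ :=
      (LocallyConvexSpace.convex_basis_zero ℝ (Crc n ⊤ Set.univ)).mem_iff.mp hWmem
    obtain ⟨U, hU, habs, hmul⟩ := main_nbhd n htK hincl hfinest hS1 hS2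
    exact ⟨U, hU, habs, fun γ hγ η hη => hSW (hmul γ hγ η hη)⟩
  have h00 : ContinuousAt
      (fun p : Crc n ⊤ Set.univ × Crc n ⊤ Set.univ => (convHom n) p.1 p.2) (0, 0) := by
    unfold ContinuousAt
    have hzero : (fun p : Crc n ⊤ Set.univ × Crc n ⊤ Set.univ =>
        (convHom n) p.1 p.2) (0, 0) = 0 := by simp
    rw [hzero, nhds_prod_eq]
    refine Filter.tendsto_def.mpr fun W hWmem => ?_
    obtain ⟨U, hU, habs, hmul⟩ := key W hWmem
    refine Filter.mem_of_superset (Filter.prod_mem_prod hU hU) ?_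
    rintro ⟨γ, η⟩ ⟨hγ, hη⟩
    exact hmul γ hγ η hη
  have hl : ∀ γ : Crc n ⊤ Set.univ, ContinuousAt ((convHom n) γ) 0 := by
    intro γ
    unfold ContinuousAt
    rw [show (convHom n) γ 0 = 0 from map_zero _]
    refine Filter.tendsto_def.mpr fun W hWmem => ?_
    obtain ⟨U, hU, habs, hmul⟩ := key W hWmem
    obtain ⟨r, hr0, hr⟩ := (habs γ).exists_pos
    set c := max r 1 with hcdef
    have hc1 : (1:ℝ) ≤ c := le_max_right _ _
    have hc0 : (0:ℝ) < c := lt_of_lt_of_le one_pos hc1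
    have hγc : γ ∈ c • U := Set.singleton_subset_iff.mp
      (hr c (by rw [Real.norm_of_nonneg hc0.le]; exact le_max_left _ _))
    obtain ⟨u, hu, huγ⟩ := Set.mem_smul_set.mp hγc
    have hsub : c⁻¹ • U ⊆ (fun η => (convHom n) γ η) ⁻¹' W := by
      intro η hη
      obtain ⟨v, hv, rfl⟩ := Set.mem_smul_set.mp hη
      show (convHom n) γ (c⁻¹ • v) ∈ W
      have heq : (convHom n) γ (c⁻¹ • v) = convCrc n u v := by
        rw [convHom_apply, ← huγ, convCrc_smul_left, convCrc_smul_right,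
          smul_inv_smul₀ hc0.ne']
      rw [heq]
      exact hmul u hu v hv
    refine Filter.mem_of_superset ?_ hsub
    have hiff := smul_mem_nhds_smul_iff₀ (c := c⁻¹) (inv_ne_zero hc0.ne')
      (s := U) (x := (0 : Crc n ⊤ Set.univ))
    rw [smul_zero] at hiff
    exact hiff.mpr hU
  have hr' : ∀ η : Crc n ⊤ Set.univ,
      ContinuousAt (fun γ : Crc n ⊤ Set.univ => (convHom n) γ η) 0 := by
    intro η
    have hswap : (fun γ : Crc n ⊤ Set.univ => (convHom n) γ η) = ((convHom n) η) :=
      funext fun γ => convCrc_comm γ η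
    rw [hswap]
    exact hl η
  exact continuous_of_continuousAt_zero₂ (convHom n) h00 hl hr'
end

section
/- Let $E$ be a locally convex space such that the tensor algebra $T_\pi(E) = \bigoplus_{j\in\mathbb{N}_0}T^j_\pi(E)$ is a topological algebra (i.e., its multiplication is continuous). Then $E$ satisfies the countable upper bound condition. -/
open Topology Filter

/-- `(T, τ)` is the *projective* tensor product `E₁ ⊗_π ⋯ ⊗_π E_j`: `τ` is an
algebraically universal multilinear map and `tT` is the finest *locally convex*
vector topology making `τ` continuous. -/
def IsPiTensorProduct {ι : Type*} [Fintype ι] [DecidableEq ι]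
    {E : ι → Type*} [∀ i, AddCommGroup (E i)] [∀ i, Module ℝ (E i)]
    (tE : ∀ i, TopologicalSpace (E i))
    {T : Type*} [AddCommGroup T] [Module ℝ T] (tT : TopologicalSpace T)
    (τ : MultilinearMap ℝ E T) : Prop :=
  (∀ (G : Type*) [AddCommGroup G] [Module ℝ G] (f : MultilinearMap ℝ E G),
      ∃! g : T →ₗ[ℝ] G, g.compMultilinearMap τ = f) ∧
  @IsTopologicalAddGroup T tT _ ∧ @ContinuousSMul ℝ T _ _ tT ∧
  @LocallyConvexSpace ℝ T _ _ _ _ tT ∧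
  Continuous[@Pi.topologicalSpace ι E tE, tT] (fun x : ∀ i, E i => τ x) ∧
  ∀ t' : TopologicalSpace T, @IsTopologicalAddGroup T t' _ → @ContinuousSMul ℝ T _ _ t' →
    @LocallyConvexSpace ℝ T _ _ _ _ t' →
    Continuous[@Pi.topologicalSpace ι E tE, t'] (fun x : ∀ i, E i => τ x) → tT ≤ t'

/-- `tS` is the locally convex direct sum topology on `Π₀ j, T j`: the finest
locally convex vector topology making all inclusions continuous. -/
def IsLcxDirectSumTopology {T : ℕ → Type*} [∀ j, AddCommGroup (T j)]
    [∀ j, Module ℝ (T j)] (tT : ∀ j, TopologicalSpace (T j))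
    (tS : TopologicalSpace (Π₀ j, T j)) : Prop :=
  @IsTopologicalAddGroup _ tS _ ∧ @ContinuousSMul ℝ _ _ _ tS ∧
  @LocallyConvexSpace ℝ _ _ _ _ _ tS ∧
  (∀ j, Continuous[tT j, tS] fun x : T j => DFinsupp.single j x) ∧
  ∀ t' : TopologicalSpace (Π₀ j, T j), @IsTopologicalAddGroup _ t' _ →
    @ContinuousSMul ℝ _ _ _ t' → @LocallyConvexSpace ℝ _ _ _ _ _ t' →
    (∀ j, Continuous[tT j, t'] fun x : T j => DFinsupp.single j x) → tS ≤ t'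


theorem aux_cont_linear_of_finest
    {X : Type*} [AddCommGroup X] [Module ℝ X] {tX : TopologicalSpace X}
    {ι : Sort*} {A : ι → Type*} [tA : ∀ i, TopologicalSpace (A i)] {φ : ∀ i, A i → X}
    (hg : @IsTopologicalAddGroup X tX _) (hs : @ContinuousSMul ℝ X _ _ tX)
    (hlc : @LocallyConvexSpace ℝ X _ _ _ _ tX)
    (hmin : ∀ t' : TopologicalSpace X, @IsTopologicalAddGroup X t' _ →
      @ContinuousSMul ℝ X _ _ t' → @LocallyConvexSpace ℝ X _ _ _ _ t' →
      (∀ i, Continuous[tA i, t'] (φ i)) → tX ≤ t')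
    (hφ : ∀ i, Continuous[tA i, tX] (φ i))
    {G : Type*} [AddCommGroup G] [Module ℝ G] [tG : TopologicalSpace G]
    [IsTopologicalAddGroup G] [ContinuousSMul ℝ G] [LocallyConvexSpace ℝ G]
    (L : X →ₗ[ℝ] G) (hL : ∀ i, Continuous fun a : A i => L (φ i a)) :
    Continuous[tX, tG] L := by
  let tI : TopologicalSpace X := tG.induced L
  have h1 : @IsTopologicalAddGroup X tI _ := topologicalAddGroup_induced L
  have h2 : @ContinuousSMul ℝ X _ _ tI := continuousSMul_induced L
  have h3 : @LocallyConvexSpace ℝ X _ _ _ _ tI := LocallyConvexSpace.induced L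
  have hle : tX ≤ tX ⊓ tI := by
    refine hmin _ (topologicalAddGroup_inf hg h1)
      (@continuousSMul_inf ℝ X _ _ tX tI hs h2) (LocallyConvexSpace.inf hlc h3) fun i => ?_
    exact continuous_inf_rng.2 ⟨hφ i, continuous_induced_rng.2 (hL i)⟩
  exact continuous_iff_le_induced.mpr (hle.trans inf_le_right)


theorem aux_seminorm_cont_of_finest
    {X : Type*} [AddCommGroup X] [Module ℝ X] {tX : TopologicalSpace X}
    {ι : Type*} {A : ι → Type*} [∀ i, AddCommGroup (A i)] [∀ i, Module ℝ (A i)]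
    [tA : ∀ i, TopologicalSpace (A i)]
    (hA : ∀ i, @IsTopologicalAddGroup (A i) (tA i) _)
    {φ : ∀ i, A i →ₗ[ℝ] X}
    (hg : @IsTopologicalAddGroup X tX _) (hs : @ContinuousSMul ℝ X _ _ tX)
    (hlc : @LocallyConvexSpace ℝ X _ _ _ _ tX)
    (hmin : ∀ t' : TopologicalSpace X, @IsTopologicalAddGroup X t' _ →
      @ContinuousSMul ℝ X _ _ t' → @LocallyConvexSpace ℝ X _ _ _ _ t' →
      (∀ i, Continuous[tA i, t'] (φ i)) → tX ≤ t')
    (hφ : ∀ i, Continuous[tA i, tX] (φ i))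
    (R : Seminorm ℝ X) (hR : ∀ i, Continuous fun a : A i => R (φ i a)) :
    Continuous[tX, _] R := by
  let P : SeminormFamily ℝ X (Fin 1) := fun _ => R
  letI tR : TopologicalSpace X := P.moduleFilterBasis.topology
  have hw : WithSeminorms P := ⟨rfl⟩
  have hgR : @IsTopologicalAddGroup X tR _ := hw.topologicalAddGroup
  have hsR : @ContinuousSMul ℝ X _ _ tR := hw.continuousSMul
  have hlcR : @LocallyConvexSpace ℝ X _ _ _ _ tR := hw.toLocallyConvexSpace
  have hφR : ∀ i, Continuous[tA i, tR] (φ i) := by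
    intro i
    haveI := hA i
    exact Seminorm.continuous_of_continuous_comp hw (φ i) fun _ => hR i
  have hle : tX ≤ tR := by
    refine le_trans (hmin (tX ⊓ tR) (topologicalAddGroup_inf hg hgR)
      (@continuousSMul_inf ℝ X _ _ tX tR hs hsR) (LocallyConvexSpace.inf hlc hlcR)
      fun i => continuous_inf_rng.2 ⟨hφ i, hφR i⟩) inf_le_right
  exact continuous_le_dom hle (hw.continuous_seminorm 0)

theorem aux_cont_of_norm_le {E G : Type*} [AddCommGroup E] [Module ℝ E]
    [TopologicalSpace E] [IsTopologicalAddGroup E] [SeminormedAddCommGroup G] [Module ℝ G]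
    (u : E →ₗ[ℝ] G) (p : Seminorm ℝ E) (hp : Continuous p)
    (h : ∀ x, ‖u x‖ ≤ p x) : Continuous u := by
  refine continuous_of_continuousAt_zero u ?_
  rw [ContinuousAt, map_zero]
  exact squeeze_zero_norm h (by simpa using hp.tendsto 0)

theorem aux_exists_le_eq {E : Type*} [AddCommGroup E] [Module ℝ E] (p : Seminorm ℝ E) (x : E) :
    ∃ f : E →ₗ[ℝ] ℝ, (∀ y, |f y| ≤ p y) ∧ f x = p x := by
  rcases eq_or_ne x 0 with rfl | hx
  · exact ⟨0, fun y => by simpa using apply_nonneg p y, by simp⟩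
  set f0 : (ℝ ∙ x) →ₗ[ℝ] ℝ := p x • (LinearEquiv.coord ℝ E x hx).toLinearMap with hf0def
  have hcoord : ∀ (c : ℝ) (h : c • x ∈ ℝ ∙ x), (LinearEquiv.coord ℝ E x hx) ⟨c • x, h⟩ = c := by
    intro c h
    have : (⟨c • x, h⟩ : ℝ ∙ x) = c • ⟨x, Submodule.mem_span_singleton_self x⟩ := by
      ext; simp
    rw [this, map_smul, LinearEquiv.coord_self, smul_eq_mul, mul_one]
  have hf0 : ∀ y : (ℝ ∙ x), f0 y ≤ p y := by
    rintro ⟨y, hy⟩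
    obtain ⟨c, rfl⟩ := Submodule.mem_span_singleton.1 hy
    have : f0 ⟨c • x, hy⟩ = p x * c := by
      rw [hf0def]
      simp only [LinearMap.smul_apply, LinearEquiv.coe_coe, smul_eq_mul]
      rw [hcoord c hy]
    rw [this]
    calc p x * c = c * p x := mul_comm _ _
      _ ≤ |c| * p x := mul_le_mul_of_nonneg_right (le_abs_self c) (apply_nonneg p x)
      _ = p (c • x) := by rw [map_smul_eq_mul, Real.norm_eq_abs]
  obtain ⟨g, hg1, hg2⟩ := exists_extension_of_le_sublinear ⟨ℝ ∙ x, f0⟩ p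
    (fun c hc y => by rw [map_smul_eq_mul, Real.norm_eq_abs, abs_of_pos hc]) (map_add_le_add p) hf0
  refine ⟨g, fun y => ?_, ?_⟩
  · rw [abs_le]
    constructor
    · have := hg2 (-y)
      rw [map_neg, map_neg_eq_map] at this
      linarith
    · exact hg2 y
  · have := hg1 ⟨x, Submodule.mem_span_singleton_self x⟩
    rw [this]
    show f0 ⟨x, _⟩ = p x
    have hx1 : (⟨x, Submodule.mem_span_singleton_self x⟩ : ℝ ∙ x)
        = ⟨(1:ℝ) • x, by simpa using Submodule.mem_span_singleton_self x⟩ := by ext; simp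
    rw [hf0def]
    simp only [LinearMap.smul_apply, LinearEquiv.coe_coe, smul_eq_mul]
    rw [hx1, hcoord 1 _, mul_one]


theorem aux_span_range_eq_top {E : Type*} [AddCommGroup E] [Module ℝ E]
    {n : ℕ} {Tk : Type*} [AddCommGroup Tk] [Module ℝ Tk]
    {τ : MultilinearMap ℝ (fun _ : Fin n => E) Tk}
    {GU : Type*} [AddCommGroup GU] [Module ℝ GU] (eGU : GU ≃ₗ[ℝ] ℝ)
    (h : ∀ f : MultilinearMap ℝ (fun _ : Fin n => E) GU,
        ∃! g : Tk →ₗ[ℝ] GU, g.compMultilinearMap τ = f) :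
    Submodule.span ℝ (Set.range ⇑τ) = ⊤ := by
  by_contra hW
  obtain ⟨x₀, hx₀⟩ : ∃ x : Tk, x ∉ Submodule.span ℝ (Set.range ⇑τ) := by
    by_contra h'
    push_neg at h'
    exact hW (Submodule.eq_top_iff'.2 h')
  set W := Submodule.span ℝ (Set.range ⇑τ) with hWdef
  have hq0 : W.mkQ x₀ ≠ 0 := by
    rw [Submodule.mkQ_apply]
    simpa [Submodule.Quotient.mk_eq_zero] using hx₀
  obtain ⟨h', hh'⟩ := LinearMap.exists_extend ((LinearEquiv.coord ℝ _ _ hq0).toLinearMap)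
  set F2 : Tk →ₗ[ℝ] GU := eGU.symm.toLinearMap ∘ₗ h' ∘ₗ W.mkQ with hF2def
  have hzero : ∀ z, W.mkQ (τ z) = 0 := fun z => by
    rw [Submodule.mkQ_apply, Submodule.Quotient.mk_eq_zero]
    exact Submodule.subset_span ⟨z, rfl⟩
  have hF2c : F2.compMultilinearMap τ = (0 : Tk →ₗ[ℝ] GU).compMultilinearMap τ := by
    ext z
    simp [hF2def, hzero z]
  have e := (h ((0 : Tk →ₗ[ℝ] GU).compMultilinearMap τ)).unique hF2c rfl
  have hval : h' (W.mkQ x₀) = 0 := by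
    have := congrArg (fun F : Tk →ₗ[ℝ] GU => eGU (F x₀)) e
    simpa [hF2def] using this
  have h1 : h' (W.mkQ x₀) = 1 := by
    have := congrArg
      (fun u : (ℝ ∙ W.mkQ x₀) →ₗ[ℝ] ℝ =>
        u ⟨W.mkQ x₀, Submodule.mem_span_singleton_self _⟩) hh'
    exact this.trans (LinearEquiv.coord_self ..)
  rw [hval] at h1
  exact zero_ne_one h1


section SumSeminorm

variable {T : ℕ → Type*} [∀ j, AddCommGroup (T j)] [∀ j, Module ℝ (T j)]

open scoped Classical in
theorem aux_dfinsupp_sum_eq (ρ : ∀ j, Seminorm ℝ (T j)) (u : Π₀ j, T j) (s : Finset ℕ)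
    (hs : u.support ⊆ s) : (u.sum fun j x => ρ j x) = ∑ j ∈ s, ρ j (u j) := by
  rw [DFinsupp.sum]
  exact Finset.sum_subset hs fun j _ hj => by
    rw [DFinsupp.notMem_support_iff.1 hj, map_zero]

open scoped Classical in
noncomputable def sumSeminorm (ρ : ∀ j, Seminorm ℝ (T j)) : Seminorm ℝ (Π₀ j, T j) :=
  Seminorm.of (fun u => u.sum fun j x => ρ j x)
    (by
      intro u v
      classical
      rw [aux_dfinsupp_sum_eq ρ (u + v) (u.support ∪ v.support) (DFinsupp.support_add),
        aux_dfinsupp_sum_eq ρ u (u.support ∪ v.support) Finset.subset_union_left,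
        aux_dfinsupp_sum_eq ρ v (u.support ∪ v.support) Finset.subset_union_right,
        ← Finset.sum_add_distrib]
      refine Finset.sum_le_sum fun j _ => ?_
      rw [DFinsupp.add_apply]
      exact map_add_le_add _ _ _)
    (by
      intro a u
      classical
      rw [aux_dfinsupp_sum_eq ρ (a • u) u.support (DFinsupp.support_smul a u),
        aux_dfinsupp_sum_eq ρ u u.support subset_rfl, Finset.mul_sum]
      refine Finset.sum_congr rfl fun j _ => ?_
      rw [DFinsupp.smul_apply, map_smul_eq_mul])

theorem sumSeminorm_single (ρ : ∀ j, Seminorm ℝ (T j)) (j : ℕ) (x : T j) :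
    sumSeminorm ρ (DFinsupp.single j x) = ρ j x := by
  classical
  show (DFinsupp.single j x).sum (fun j x => ρ j x) = ρ j x
  refine DFinsupp.sum_single_index ?_
  simp

end SumSeminorm

theorem aux_perk
    {E : Type*} [AddCommGroup E] [Module ℝ E] [tE : TopologicalSpace E]
    [IsTopologicalAddGroup E] [ContinuousSMul ℝ E] [LocallyConvexSpace ℝ E]
    {k : ℕ} {Tk : Type*} [AddCommGroup Tk] [Module ℝ Tk] {tTk : TopologicalSpace Tk}
    {τk : MultilinearMap ℝ (fun _ : Fin (k+1) => E) Tk}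
    (hTk : IsPiTensorProduct (fun _ : Fin (k+1) => tE) tTk τk)
    (p : Seminorm ℝ E) (hp : Continuous p)
    (g : E →ₗ[ℝ] ℝ) (hg : Continuous g) :
    ∃ r : Seminorm ℝ Tk, Continuous[tTk, _] r ∧
      ∀ x a : E, |g a| ^ k * p x ≤
        r (τk (Fin.append (fun _ : Fin k => a) (fun _ : Fin 1 => x))) := by
  obtain ⟨huniv, hTg, hTs, hTl, hτc, hTmin⟩ := hTk
  -- the scalar multilinear maps
  let m : (E →ₗ[ℝ] ℝ) → MultilinearMap ℝ (fun _ : Fin (k+1) => E) ℝ := fun f =>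
    MultilinearMap.uncurryRight ((MultilinearMap.mkPiRing ℝ (Fin k) f).compLinearMap fun _ => g)
  have hm : ∀ f z, m f z = (∏ i : Fin k, g (z i.castSucc)) * f (z (Fin.last k)) := by
    intro f z
    simp [m, MultilinearMap.uncurryRight_apply, MultilinearMap.compLinearMap_apply,
      MultilinearMap.mkPiRing_apply, Fin.init]
  -- extensions to Tk
  have hex : ∀ f : E →ₗ[ℝ] ℝ, ∃ F : Tk →ₗ[ℝ] ℝ, ∀ z, F (τk z) = m f z := by
    intro f
    obtain ⟨F0, hF0, -⟩ :=
      huniv (ULift ℝ) ((ULift.moduleEquiv.symm.toLinearMap).compMultilinearMap (m f))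
    refine ⟨ULift.moduleEquiv.toLinearMap.comp F0, fun z => ?_⟩
    have h1 := DFunLike.congr_fun hF0 z
    simp only [LinearMap.compMultilinearMap_apply] at h1
    simp [h1]
  choose F hF using hex
  have hspan : Submodule.span ℝ (Set.range ⇑τk) = ⊤ :=
    aux_span_range_eq_top ULift.moduleEquiv (huniv (ULift ℝ))
  -- the subtype of p-dominated functionals, with the discrete topology
  let Fam := {f : E →ₗ[ℝ] ℝ // ∀ y, |f y| ≤ p y}
  letI : TopologicalSpace Fam := ⊥
  haveI : DiscreteTopology Fam := ⟨rfl⟩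
  -- uniform bound
  have hbd : ∀ t : Tk, ∃ M : ℝ, ∀ f : Fam, |F f.1 t| ≤ M := by
    intro t
    have ht : t ∈ Submodule.span ℝ (Set.range ⇑τk) := hspan ▸ Submodule.mem_top
    refine Submodule.span_induction (p := fun t _ => ∃ M : ℝ, ∀ f : Fam, |F f.1 t| ≤ M)
      ?_ ?_ ?_ ?_ ht
    · rintro _ ⟨z, rfl⟩
      refine ⟨(∏ i : Fin k, |g (z i.castSucc)|) * p (z (Fin.last k)), fun f => ?_⟩
      rw [hF, hm, abs_mul, Finset.abs_prod]
      exact mul_le_mul_of_nonneg_left (f.2 _)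
        (Finset.prod_nonneg fun _ _ => abs_nonneg _)
    · exact ⟨0, fun f => by simp⟩
    · rintro t₁ t₂ - - ⟨M₁, h₁⟩ ⟨M₂, h₂⟩
      exact ⟨M₁ + M₂, fun f => by
        rw [map_add]; exact (abs_add_le _ _).trans (add_le_add (h₁ f) (h₂ f))⟩
    · rintro c t - ⟨M, h₁⟩
      exact ⟨|c| * M, fun f => by
        rw [map_smul, smul_eq_mul, abs_mul]
        exact mul_le_mul_of_nonneg_left (h₁ f) (abs_nonneg _)⟩
  -- the evaluation map Θ
  let Θ : E →ₗ[ℝ] BoundedContinuousFunction Fam ℝ :=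
    { toFun := fun x =>
        ⟨⟨fun f => f.1 x, continuous_of_discreteTopology⟩, ⟨2 * p x, fun f f' => by
          rw [Real.dist_eq]
          calc |f.1 x - f'.1 x| ≤ |f.1 x| + |f'.1 x| := abs_sub _ _
            _ ≤ p x + p x := add_le_add (f.2 x) (f'.2 x)
            _ = 2 * p x := (two_mul _).symm⟩⟩
      map_add' := fun x y => by
        ext f
        show f.1 (x + y) = f.1 x + f.1 y
        rw [map_add]
      map_smul' := fun c x => by
        ext f
        show f.1 (c • x) = c • f.1 x
        rw [map_smul] }
  have hΘnorm : ∀ x, ‖Θ x‖ ≤ p x := fun x =>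
    (BoundedContinuousFunction.norm_le (apply_nonneg p x)).2 fun f => by
      rw [Real.norm_eq_abs]; exact f.2 x
  have hΘcont : Continuous Θ := aux_cont_of_norm_le Θ p hp hΘnorm
  -- the map Φ into bounded functions
  let Φ : Tk →ₗ[ℝ] BoundedContinuousFunction Fam ℝ :=
    { toFun := fun t =>
        ⟨⟨fun f => F f.1 t, continuous_of_discreteTopology⟩, by
          obtain ⟨M, hM⟩ := hbd t
          exact ⟨2 * M, fun f f' => by
            rw [Real.dist_eq]
            calc |F f.1 t - F f'.1 t| ≤ |F f.1 t| + |F f'.1 t| := abs_sub _ _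
              _ ≤ M + M := add_le_add (hM f) (hM f')
              _ = 2 * M := (two_mul _).symm⟩⟩
      map_add' := fun t t' => by
        ext f
        show F f.1 (t + t') = F f.1 t + F f.1 t'
        rw [map_add]
      map_smul' := fun c t => by
        ext f
        show F f.1 (c • t) = c • F f.1 t
        rw [map_smul] }
  have hΦτ : ∀ z, Φ (τk z) = (∏ i : Fin k, g (z i.castSucc)) • Θ (z (Fin.last k)) := by
    intro z
    ext f
    show F f.1 (τk z) = (∏ i : Fin k, g (z i.castSucc)) • f.1 (z (Fin.last k))
    rw [hF, hm, smul_eq_mul]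
  have hΦc : Continuous[tTk, _] Φ := by
    refine aux_cont_linear_of_finest (ι := Unit) (A := fun _ => (Fin (k+1) → E))
      (φ := fun _ x => τk x) hTg hTs hTl
      (fun t' h1 h2 h3 h4 => hTmin t' h1 h2 h3 (h4 ())) (fun _ => hτc) Φ fun _ => ?_
    have hc : Continuous fun z : Fin (k+1) → E =>
        (∏ i : Fin k, g (z i.castSucc)) • Θ (z (Fin.last k)) := by
      exact (continuous_finset_prod _ fun i _ => hg.comp (continuous_apply _)).smul
        (hΘcont.comp (continuous_apply _))
    have heq : (fun z : Fin (k+1) → E => Φ (τk z)) =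
        fun z => (∏ i : Fin k, g (z i.castSucc)) • Θ (z (Fin.last k)) := funext hΦτ
    rw [heq]
    exact hc
  refine ⟨(normSeminorm ℝ (BoundedContinuousFunction Fam ℝ)).comp Φ, ?_, ?_⟩
  · exact continuous_norm.comp hΦc
  · intro x a
    obtain ⟨f, hf1, hf2⟩ := aux_exists_le_eq p x
    set z : Fin (k+1) → E := Fin.append (fun _ : Fin k => a) (fun _ : Fin 1 => x) with hz
    have hbound : |F f (τk z)| ≤ ((normSeminorm ℝ _).comp Φ) (τk z) := by
      have := BoundedContinuousFunction.norm_coe_le_norm (Φ (τk z)) ⟨f, hf1⟩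
      simpa [Φ, Real.norm_eq_abs] using this
    refine le_trans (le_of_eq ?_) hbound
    rw [hF, hm]
    have h1 : ∀ i : Fin k, z i.castSucc = a := by
      intro i
      rw [hz, Fin.append_right_eq_snoc, Fin.snoc_castSucc]
    have h2 : z (Fin.last k) = x := by
      rw [hz, Fin.append_right_eq_snoc, Fin.snoc_last]
    simp only [h1, h2, Finset.prod_const, Finset.card_univ, Fintype.card_fin]
    rw [hf2, abs_mul, abs_pow, abs_of_nonneg (apply_nonneg p x)]

/-- **Theorem B, necessity**: if the tensor algebra `T_π(E)` of a locally convex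
space `E` is a topological algebra, then `E` satisfies the countable upper bound
condition. -/
theorem countableUBC_of_tensorAlgebra_topologicalAlgebra
    {E : Type*} [AddCommGroup E] [Module ℝ E] [tE : TopologicalSpace E]
    [IsTopologicalAddGroup E] [ContinuousSMul ℝ E] [LocallyConvexSpace ℝ E]
    -- the projective tensor powers `T j = T^j_π(E)`:
    {T : ℕ → Type*} [∀ j, AddCommGroup (T j)] [∀ j, Module ℝ (T j)]
    [tT : ∀ j, TopologicalSpace (T j)]
    (τ : ∀ j, MultilinearMap ℝ (fun _ : Fin j => E) (T j))
    (hT : ∀ j, IsPiTensorProduct (fun _ : Fin j => tE) (tT j) (τ j))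
    -- the tensor algebra `T_π(E) = ⨁_j T^j_π(E)` with the locally convex direct sum topology:
    [tS : TopologicalSpace (Π₀ j, T j)]
    (hS : IsLcxDirectSumTopology (fun j => tT j) tS)
    -- the algebra multiplication, determined by concatenation of elementary tensors:
    (β : (Π₀ j, T j) →ₗ[ℝ] (Π₀ j, T j) →ₗ[ℝ] (Π₀ j, T j))
    (hβ : ∀ (i j : ℕ) (x : Fin i → E) (y : Fin j → E),
      β (DFinsupp.single i ((τ i) x)) (DFinsupp.single j ((τ j) y)) =
        DFinsupp.single (i + j) ((τ (i + j)) (Fin.append x y)))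
    (hcont : Continuous fun pr : (Π₀ j, T j) × (Π₀ j, T j) => β pr.1 pr.2) :
    ∀ p : ℕ → Seminorm ℝ E, (∀ k, Continuous (p k)) →
      ∃ q : Seminorm ℝ E, Continuous q ∧ ∀ k, ∃ C > (0 : ℝ), ∀ x, p k x ≤ C * q x := by
  intro p hp
  obtain ⟨hSg, hSs, hSl, hSi, hSmin⟩ := hS
  haveI := hSg
  haveI := hSs
  haveI := hSl
  -- choose dominated functionals, positive somewhere when the seminorm is nonzero
  have hgex : ∀ k : ℕ, ∃ (g : E →ₗ[ℝ] ℝ) (a : E),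
      (∀ y, |g y| ≤ p k y) ∧ ((∃ z, p k z ≠ 0) → 0 < g a) := by
    intro k
    by_cases hk : ∃ z, p k z ≠ 0
    · obtain ⟨a, ha⟩ := hk
      obtain ⟨f, hf1, hf2⟩ := aux_exists_le_eq (p k) a
      exact ⟨f, a, hf1, fun _ => by
        rw [hf2]; exact lt_of_le_of_ne (apply_nonneg _ _) (Ne.symm ha)⟩
    · exact ⟨0, 0, fun y => by simpa using apply_nonneg (p k) y, fun h => absurd h hk⟩
  choose g a hgle hgpos using hgex
  have hgc : ∀ k, Continuous (g k) := fun k =>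
    aux_cont_of_norm_le (g k) (p k) (hp k) fun x => by
      rw [Real.norm_eq_abs]; exact hgle k x
  -- the per-degree seminorms
  have hrex : ∀ k : ℕ, ∃ r : Seminorm ℝ (T (k+1)), Continuous r ∧
      ∀ x b : E, |g k b| ^ k * p k x ≤
        r ((τ (k+1)) (Fin.append (fun _ : Fin k => b) (fun _ : Fin 1 => x))) :=
    fun k => aux_perk (hT (k+1)) (p k) (hp k) (g k) (hgc k)
  choose r hrc hrb using hrex
  -- assemble the seminorm R on the direct sum
  let ρ : ∀ j, Seminorm ℝ (T j) := fun j =>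
    match j with
    | 0 => 0
    | (k+1) => r k
  have hρc : ∀ j, Continuous (ρ j) := by
    intro j
    match j with
    | 0 =>
      show Continuous fun x : T 0 => (0 : Seminorm ℝ (T 0)) x
      simpa using continuous_const
    | (k+1) => exact hrc k
  let R := sumSeminorm ρ
  have hRs : ∀ j (x : T j), R (DFinsupp.single j x) = ρ j x := fun j x => sumSeminorm_single ρ j x
  have hRc : Continuous R := by
    refine aux_seminorm_cont_of_finest (φ := fun j => DFinsupp.lsingle j)
      (fun j => (hT j).2.1) hSg hSs hSl ?_ ?_ R ?_
    · intro t' h1 h2 h3 h4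
      exact hSmin t' h1 h2 h3 h4
    · exact hSi
    · intro j
      have heq : (fun x : T j => R (DFinsupp.lsingle (R := ℝ) j x)) = fun x => ρ j x :=
        funext fun x => hRs j x
      rw [heq]
      exact hρc j
  -- find an absolutely convex open neighborhood controlling the multiplication
  have hO : IsOpen {w : Π₀ j, T j | R w < 1} := isOpen_lt hRc continuous_const
  have hpre : (fun pr : (Π₀ j, T j) × (Π₀ j, T j) => β pr.1 pr.2) ⁻¹' {w | R w < 1} ∈
      𝓝 ((0 : Π₀ j, T j), (0 : Π₀ j, T j)) := by
    apply (hO.preimage hcont).mem_nhds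
    simp [Set.mem_setOf_eq, map_zero]
  rw [nhds_prod_eq] at hpre
  obtain ⟨U, hU, V, hV, hUV⟩ := Filter.mem_prod_iff.1 hpre
  obtain ⟨W, hWprop, hWsub⟩ :=
    (nhds_hasBasis_absConvex_open ℝ (Π₀ j, T j)).mem_iff.1 (Filter.inter_mem hU hV)
  obtain ⟨hW0, hWopen, hWbal, hWconv⟩ := hWprop
  let Q : Seminorm ℝ (Π₀ j, T j) :=
    gaugeSeminorm hWbal hWconv (absorbent_nhds_zero (hWopen.mem_nhds hW0))
  have hQW : ∀ u, Q u < 1 ↔ u ∈ W := by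
    intro u
    have hset := gauge_lt_one_eq_self_of_isOpen hWconv hW0 hWopen
    constructor
    · intro h
      have hmem : u ∈ {x | gauge W x < 1} := by
        exact h
      rwa [hset] at hmem
    · intro h
      have hmem : u ∈ {x | gauge W x < 1} := by rw [hset]; exact h
      exact hmem
  have hQc : Continuous Q := by
    refine Seminorm.continuous (r := 1) ?_
    apply Filter.mem_of_superset (hWopen.mem_nhds hW0)
    intro u hu
    rw [Seminorm.mem_ball, sub_zero]
    exact (hQW u).2 hu
  -- key bilinear estimate
  have hkey : ∀ u v, R (β u v) ≤ Q u * Q v := by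
    intro u v
    have step : ∀ s t : ℝ, Q u < s → Q v < t → R (β u v) ≤ s * t := by
      intro s t hus hvt
      have hs : (0:ℝ) < s := (apply_nonneg Q u).trans_lt hus
      have ht : (0:ℝ) < t := (apply_nonneg Q v).trans_lt hvt
      have hu' : s⁻¹ • u ∈ W := (hQW _).1 (by
        rw [map_smul_eq_mul, Real.norm_eq_abs, abs_of_pos (inv_pos.2 hs),
          ← div_eq_inv_mul, div_lt_one hs]
        exact hus)
      have hv' : t⁻¹ • v ∈ W := (hQW _).1 (by
        rw [map_smul_eq_mul, Real.norm_eq_abs, abs_of_pos (inv_pos.2 ht),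
          ← div_eq_inv_mul, div_lt_one ht]
        exact hvt)
      have hmem := hUV (show (s⁻¹ • u, t⁻¹ • v) ∈ U ×ˢ V from ⟨(hWsub hu').1, (hWsub hv').2⟩)
      have heq : β (s⁻¹ • u) (t⁻¹ • v) = (s⁻¹ * t⁻¹) • β u v := by
        simp only [map_smul, LinearMap.smul_apply, smul_smul]
        rw [mul_comm]
      have hlt : R (β (s⁻¹ • u) (t⁻¹ • v)) < 1 := hmem
      rw [heq, map_smul_eq_mul, Real.norm_eq_abs, abs_of_pos (by positivity)] at hlt
      calc R (β u v) = (s * t) * (s⁻¹ * t⁻¹ * R (β u v)) := by field_simp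
        _ ≤ (s * t) * 1 := mul_le_mul_of_nonneg_left hlt.le (by positivity)
        _ = s * t := mul_one _
    have hlim : Tendsto (fun ε : ℝ => (Q u + ε) * (Q v + ε)) (𝓝[>] 0) (𝓝 (Q u * Q v)) := by
      have hca : ContinuousAt (fun ε : ℝ => (Q u + ε) * (Q v + ε)) 0 := by fun_prop
      have hten := hca.tendsto.mono_left (nhdsWithin_le_nhds : 𝓝[Set.Ioi (0:ℝ)] 0 ≤ 𝓝 0)
      simpa using hten
    refine ge_of_tendsto hlim ?_
    filter_upwards [self_mem_nhdsWithin] with ε hε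
    exact step _ _ (lt_add_of_pos_right _ hε) (lt_add_of_pos_right _ hε)
  -- the seminorm q on E
  let ι1 : E →ₗ[ℝ] (Π₀ j, T j) :=
    (DFinsupp.lsingle 1).comp ((MultilinearMap.ofSubsingleton ℝ E (T 1) (0 : Fin 1)).symm (τ 1))
  have hι1 : ∀ x, ι1 x = DFinsupp.single 1 ((τ 1) (fun _ : Fin 1 => x)) := fun x => rfl
  refine ⟨Q.comp ι1, ?_, ?_⟩
  · have hc : Continuous fun x : E => DFinsupp.single 1 ((τ 1) (fun _ : Fin 1 => x)) :=
      (hSi 1).comp ((hT 1).2.2.2.2.1.comp (continuous_pi fun _ => continuous_id))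
    have hgoal : Continuous fun x : E => Q (ι1 x) := by
      simp only [hι1]
      exact hQc.comp hc
    exact hgoal
  · intro k
    by_cases hk : ∃ z, p k z ≠ 0
    · have hga : 0 < g k (a k) := hgpos k hk
      set c := Q (DFinsupp.single k ((τ k) (fun _ : Fin k => a k))) with hc
      set d := |g k (a k)| ^ k with hd
      have hd0 : (0:ℝ) < d := pow_pos (abs_pos.2 hga.ne') k
      refine ⟨c / d + 1,
        add_pos_of_nonneg_of_pos (div_nonneg (apply_nonneg _ _) hd0.le) one_pos, fun x => ?_⟩
      have h1 : d * p k x ≤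
          R (β (DFinsupp.single k ((τ k) fun _ => a k))
            (DFinsupp.single 1 ((τ 1) fun _ => x))) := by
        rw [hβ k 1, hRs (k+1)]
        exact hrb k x (a k)
      have h2 := hkey (DFinsupp.single k ((τ k) fun _ => a k))
        (DFinsupp.single 1 ((τ 1) fun _ => x))
      have hqx : (Q.comp ι1) x = Q (DFinsupp.single 1 ((τ 1) fun _ => x)) := by
        rw [Seminorm.comp_apply, hι1]
      have h3 : d * p k x ≤ c * (Q.comp ι1) x := by
        rw [hqx]
        exact le_trans h1 h2
      have hq0 : (0:ℝ) ≤ (Q.comp ι1) x := apply_nonneg _ _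
      have h4 : p k x ≤ (c / d) * (Q.comp ι1) x := by
        rw [div_mul_eq_mul_div, le_div_iff₀ hd0, mul_comm (p k x) d]
        exact h3
      have h5 : (c / d) * (Q.comp ι1) x ≤ (c / d + 1) * (Q.comp ι1) x := by
        apply mul_le_mul_of_nonneg_right _ hq0
        linarith
      linarith
    · push_neg at hk
      refine ⟨1, one_pos, fun x => ?_⟩
      rw [hk x]
      positivity
end
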